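/- arXiv:2410.12494 — 7 statements merged into one kernel-verified Lean document; each statement's English description precedes it below -/
import Mathlib

section
/- For a finite poset P, a point i ∈ P, and a finite poset Q, fix a linear extension g of Q and let R_g be the set of linear extensions f of P ∘_i Q such that the linear order induced by f on Q equals g. Then there is a bijection between the set of all linear extensions of P ∘_i Q and the product R_g × L(Q), where L(Q) is the set of linear extensions of Q. -/
open scoped Lex

/-- A finite poset is a chain if any two elements are comparable. -/
def IsChainPoset (R : Type*) [PartialOrder R] : Prop := ∀ x y : R, x ≤ y ∨ y ≤ x

/-- Linear extensions of a finite poset `R`: order-preserving bijective labelings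
by `{1, …, |R|}` (here modeled by `Fin (card R)`). -/
def LinExt (R : Type*) [PartialOrder R] [Fintype R] :=
  {f : R ≃ Fin (Fintype.card R) // ∀ x y : R, x < y → f x < f y}

/-- `e(R)`: the number of linear extensions of `R`. -/
noncomputable def numExt (R : Type*) [PartialOrder R] [Fintype R] : ℕ := Nat.card (LinExt R)

/-- The number of linear extensions of `R` placing `x` below `y`. -/
noncomputable def numBelow (R : Type*) [PartialOrder R] [Fintype R] (x y : R) : ℕ :=
  Nat.card {f : LinExt R // f.1 x < f.1 y}

/-- The number of linear extensions of `R` placing `a` below `b` and `c` below `d`. -/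
noncomputable def numBelow2 (R : Type*) [PartialOrder R] [Fintype R] (a b c d : R) : ℕ :=
  Nat.card {f : LinExt R // f.1 a < f.1 b ∧ f.1 c < f.1 d}

/-- `ℙ_R(x < y)`: the fraction of linear extensions of `R` placing `x` below `y`. -/
noncomputable def probBelow (R : Type*) [PartialOrder R] [Fintype R] (x y : R) : ℚ :=
  (numBelow R x y : ℚ) / (numExt R : ℚ)

/-- `δ(R) = max_{x ≠ y} min {ℙ_R(x<y), ℙ_R(y<x)}` (and `0` for chains / small posets). -/
noncomputable def delta (R : Type*) [PartialOrder R] [Fintype R] [DecidableEq R] : ℚ :=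
  Finset.univ.fold max 0 (fun xy : R × R =>
    if xy.1 = xy.2 then 0 else min (probBelow R xy.1 xy.2) (probBelow R xy.2 xy.1))

/-- The lexicographic sum `P ∘_i Q`: the poset obtained from `P` by replacing the
point `i` by the poset `Q`, elements of `Q` inheriting all comparabilities of `i`. -/
def LexAt (P : Type*) (i : P) (Q : Type*) := {p : P // p ≠ i} ⊕ Q

instance LexAt.instPartialOrder (P : Type*) [PartialOrder P] (i : P) (Q : Type*)
    [PartialOrder Q] : PartialOrder (LexAt P i Q) where
  le x y :=
    match x, y with
    | .inl a, .inl b => a.1 ≤ b.1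
    | .inl a, .inr _ => a.1 < i
    | .inr _, .inl b => i < b.1
    | .inr q, .inr q' => q ≤ q'
  le_refl x := by cases x <;> exact le_refl _
  le_trans x y z hxy hyz := by
    cases x <;> cases y <;> cases z <;>
    first
      | exact hxy
      | exact hyz
      | exact le_trans hxy hyz
      | exact lt_of_le_of_lt hxy hyz
      | exact lt_of_lt_of_le hxy hyz
      | exact le_of_lt (lt_trans hxy hyz)
      | exact absurd (lt_trans hxy hyz) (lt_irrefl i)
  le_antisymm x y hxy hyx := by
    cases x <;> cases y <;>
    first
      | exact congrArg Sum.inl (Subtype.ext (le_antisymm hxy hyx))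
      | exact congrArg Sum.inr (le_antisymm hxy hyx)
      | exact absurd (lt_trans hxy hyx) (lt_irrefl i)
      | exact absurd (lt_trans hyx hxy) (lt_irrefl i)

instance LexAt.instFintype (P : Type*) [Fintype P] [DecidableEq P] (i : P) (Q : Type*)
    [Fintype Q] : Fintype (LexAt P i Q) := inferInstanceAs (Fintype ({p : P // p ≠ i} ⊕ Q))

instance LexAt.instDecidableEq (P : Type*) [DecidableEq P] (i : P) (Q : Type*)
    [DecidableEq Q] : DecidableEq (LexAt P i Q) :=
  inferInstanceAs (DecidableEq ({p : P // p ≠ i} ⊕ Q))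

section Aux
set_option linter.unusedSectionVars false

variable {P Q : Type} [PartialOrder P] [Fintype P] [DecidableEq P]
  [PartialOrder Q] [Fintype Q] {i : P}

lemma LexAt.inl_lt_inr {a : {p : P // p ≠ i}} {q : Q} :
    @LT.lt (LexAt P i Q) _ (Sum.inl a) (Sum.inr q) ↔ (a : P) < i := by
  constructor
  · intro h; exact h.le
  · intro h
    refine lt_iff_le_not_ge.mpr ⟨h, fun h' => ?_⟩
    exact absurd (lt_trans (show i < (a : P) from h') h) (lt_irrefl i)

lemma LexAt.inr_lt_inl {a : {p : P // p ≠ i}} {q : Q} :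
    @LT.lt (LexAt P i Q) _ (Sum.inr q) (Sum.inl a) ↔ i < (a : P) := by
  constructor
  · intro h; exact h.le
  · intro h
    refine lt_iff_le_not_ge.mpr ⟨h, fun h' => ?_⟩
    exact absurd (lt_trans h (show (a : P) < i from h')) (lt_irrefl i)

lemma LexAt.inr_lt_inr {q q' : Q} :
    @LT.lt (LexAt P i Q) _ (Sum.inr q) (Sum.inr q') ↔ q < q' := by
  constructor
  · intro h
    exact lt_iff_le_not_ge.mpr ⟨h.le, fun h' =>
      h.not_ge (show @LE.le (LexAt P i Q) _ (Sum.inr q') (Sum.inr q) from h')⟩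
  · intro h
    exact lt_iff_le_not_ge.mpr ⟨h.le, fun h' => h.not_ge (show q' ≤ q from h')⟩

/-- Relabeling the `Q`-part of a linear extension of `LexAt P i Q` by a permutation `σ`
that is compatible with the order of `Q`. -/
def LexAt.reindex (f : LinExt (LexAt P i Q)) (σ : Q ≃ Q)
    (hσ : ∀ q₁ q₂ : Q, q₁ < q₂ → f.1 (Sum.inr (σ q₁)) < f.1 (Sum.inr (σ q₂))) :
    LinExt (LexAt P i Q) :=
  ⟨(Equiv.sumCongr (Equiv.refl _) σ).trans f.1, by
    intro x y hxy
    cases x with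
    | inl a =>
      cases y with
      | inl b => exact f.2 _ _ hxy
      | inr q =>
        show f.1 (Sum.inl a) < f.1 (Sum.inr (σ q))
        exact f.2 _ _ (LexAt.inl_lt_inr.mpr (LexAt.inl_lt_inr.mp hxy))
    | inr q =>
      cases y with
      | inl b =>
        show f.1 (Sum.inr (σ q)) < f.1 (Sum.inl b)
        exact f.2 _ _ (LexAt.inr_lt_inl.mpr (LexAt.inr_lt_inl.mp hxy))
      | inr q' =>
        show f.1 (Sum.inr (σ q)) < f.1 (Sum.inr (σ q'))
        exact hσ _ _ (LexAt.inr_lt_inr.mp hxy)⟩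

@[simp] lemma LexAt.reindex_inl (f : LinExt (LexAt P i Q)) (σ : Q ≃ Q) (hσ) (a) :
    (LexAt.reindex f σ hσ).1 (Sum.inl a) = f.1 (Sum.inl a) := rfl

@[simp] lemma LexAt.reindex_inr (f : LinExt (LexAt P i Q)) (σ : Q ≃ Q) (hσ) (q : Q) :
    (LexAt.reindex f σ hσ).1 (Sum.inr q) = f.1 (Sum.inr (σ q)) := rfl

/-- The `Q`-positions of a linear extension of `LexAt P i Q`, as a finset of `Fin n`. -/
noncomputable def LexAt.qset (f : LinExt (LexAt P i Q)) :
    Finset (Fin (Fintype.card (LexAt P i Q))) :=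
  Finset.univ.image (fun q : Q => f.1 (Sum.inr q))

lemma LexAt.qset_card (f : LinExt (LexAt P i Q)) : (LexAt.qset f).card = Fintype.card Q := by
  rw [LexAt.qset, Finset.card_image_of_injective _
    (fun a b hab => Sum.inr_injective (f.1.injective hab))]
  simp

/-- The linear extension of `Q` induced by a linear extension of `LexAt P i Q`. -/
noncomputable def LexAt.induced (f : LinExt (LexAt P i Q)) : LinExt Q := by
  refine ⟨Equiv.ofBijective
    (fun q => (Finset.orderIsoOfFin _ (LexAt.qset_card f)).symm
      ⟨f.1 (Sum.inr q), Finset.mem_image_of_mem _ (Finset.mem_univ q)⟩) ?_, ?_⟩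
  · rw [Fintype.bijective_iff_injective_and_card]
    refine ⟨fun a b hab => ?_, by simp⟩
    have := (Finset.orderIsoOfFin _ (LexAt.qset_card f)).symm.injective hab
    exact Sum.inr_injective (f.1.injective (congrArg Subtype.val this))
  · intro q₁ q₂ h
    simp only [Equiv.ofBijective_apply]
    rw [OrderIso.lt_iff_lt]
    exact Subtype.mk_lt_mk.mpr (f.2 _ _ (LexAt.inr_lt_inr.mpr h))

lemma LexAt.induced_lt_iff (f : LinExt (LexAt P i Q)) (q₁ q₂ : Q) :
    (LexAt.induced f).1 q₁ < (LexAt.induced f).1 q₂ ↔ f.1 (Sum.inr q₁) < f.1 (Sum.inr q₂) := by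
  show (Finset.orderIsoOfFin _ (LexAt.qset_card f)).symm _ <
    (Finset.orderIsoOfFin _ (LexAt.qset_card f)).symm _ ↔ _
  rw [OrderIso.lt_iff_lt]
  exact Subtype.mk_lt_mk

/-- Two linear extensions of `Q` inducing the same order are equal. -/
lemma LinExt.eq_of_lt_iff (h₁ h₂ : LinExt Q)
    (h : ∀ q₁ q₂ : Q, h₁.1 q₁ < h₁.1 q₂ ↔ h₂.1 q₁ < h₂.1 q₂) : h₁ = h₂ := by
  haveI : WellFoundedLT (Fin (Fintype.card Q)) := inferInstance
  have hsm : StrictMono (fun a => h₂.1 (h₁.1.symm a)) := by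
    intro a b hab
    exact (h _ _).mp (by simpa using hab)
  have hid : StrictMono (id : Fin (Fintype.card Q) → Fin (Fintype.card Q)) := strictMono_id
  have hr : Set.range (fun a => h₂.1 (h₁.1.symm a)) =
      Set.range (id : Fin (Fintype.card Q) → Fin (Fintype.card Q)) := by
    rw [Set.range_id, Set.range_eq_univ]
    exact (h₁.1.symm.trans h₂.1).surjective
  have := (hsm.range_inj hid).mp hr
  apply Subtype.ext
  apply Equiv.ext
  intro q
  have := congrFun this (h₁.1 q)
  simpa using this.symm

end Aux

/-- fixing a linear extension `g` of `Q`, the set of linear extensions of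
`P ∘_i Q` is in bijection with `R_g × L(Q)`, where `R_g` is the set of linear extensions
of `P ∘_i Q` whose induced linear order on `Q` is `g`. -/
theorem linExt_lexAt_equiv_prod (P Q : Type) [PartialOrder P] [Fintype P] [DecidableEq P]
    [PartialOrder Q] [Fintype Q] (i : P) (g : LinExt Q) :
    Nonempty (LinExt (LexAt P i Q) ≃
      {f : LinExt (LexAt P i Q) //
        ∀ q₁ q₂ : Q, f.1 (Sum.inr q₁) < f.1 (Sum.inr q₂) ↔ g.1 q₁ < g.1 q₂} × LinExt Q) := by
  classical
  -- forward map: relabel the Q-part of `f` so that its induced order is `g`,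
  -- remembering the original induced extension.
  refine ⟨{
    toFun := fun f =>
      (⟨LexAt.reindex f (g.1.trans (LexAt.induced f).1.symm) (fun q₁ q₂ h => by
          rw [← LexAt.induced_lt_iff]
          simpa using g.2 _ _ h), by
        intro q₁ q₂
        rw [LexAt.reindex_inr, LexAt.reindex_inr, ← LexAt.induced_lt_iff]
        simp⟩, LexAt.induced f)
    invFun := fun fh =>
      LexAt.reindex fh.1.1 (fh.2.1.trans g.1.symm) (fun q₁ q₂ h => by
        rw [fh.1.2]
        simpa using fh.2.2 _ _ h)
    left_inv := fun f => by
      apply Subtype.ext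
      apply Equiv.ext
      intro x
      cases x with
      | inl a => rfl
      | inr q => simp [LexAt.reindex_inr]
    right_inv := fun fh => by
      obtain ⟨⟨f, hf⟩, h⟩ := fh
      set F := LexAt.reindex f (h.1.trans g.1.symm) (fun q₁ q₂ hlt => by
        rw [hf]
        simpa using h.2 _ _ hlt) with hF
      have hind : LexAt.induced F = h := by
        apply LinExt.eq_of_lt_iff
        intro q₁ q₂
        rw [LexAt.induced_lt_iff, hF, LexAt.reindex_inr, LexAt.reindex_inr, hf]
        simp
      refine Prod.ext ?_ hind
      apply Subtype.ext
      apply Subtype.ext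
      apply Equiv.ext
      intro x
      cases x with
      | inl a => rfl
      | inr q =>
        rw [LexAt.reindex_inr, Equiv.trans_apply, hind]
        simp only [LexAt.reindex_inr]
        simp }⟩
end

section
/- Let P be a finite poset with elements p₁,…,pₙ and let Q₁,…,Qₙ be finite posets. Then the product e(Q₁)·e(Q₂)⋯e(Qₙ) divides e(P(Q₁,…,Qₙ)), the number of linear extensions of the lexicographic sum. -/
open scoped Lex

instance sigmaLex.instFintype (ι : Type*) [Fintype ι] [DecidableEq ι] (Q : ι → Type*)
    [∀ i, Fintype (Q i)] : Fintype (Σₗ i, Q i) := inferInstanceAs (Fintype (Σ i, Q i))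

instance sigmaLex.instDecidableEq (ι : Type*) [DecidableEq ι] (Q : ι → Type*)
    [∀ i, DecidableEq (Q i)] : DecidableEq (Σₗ i, Q i) :=
  inferInstanceAs (DecidableEq (Σ i, Q i))

namespace LexSumAux

theorem linExt_nonempty' (R : Type*) [PartialOrder R] [Fintype R] : Nonempty (LinExt R) := by
  letI : Fintype (LinearExtension R) := ‹Fintype R›
  let e : Fin (Fintype.card R) ≃o LinearExtension R := monoEquivOfFin _ rfl
  have hsm : StrictMono (toLinearExtension (α := R)) :=
    toLinearExtension.monotone.strictMono_of_injective fun a b h => h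
  exact ⟨⟨(Equiv.refl R : R ≃ LinearExtension R).trans e.symm.toEquiv,
    fun x y hxy => e.symm.strictMono (hsm hxy)⟩⟩

noncomputable def rankEquiv {α : Type*} [Fintype α] (L : LinearOrder α) :
    α ≃ Fin (Fintype.card α) :=
  letI := L
  (monoEquivOfFin α rfl).symm.toEquiv

theorem rankEquiv_lt_iff {α : Type*} [Fintype α] (L : LinearOrder α) (a b : α) :
    rankEquiv L a < rankEquiv L b ↔ L.lt a b := by
  letI := L
  exact (monoEquivOfFin α rfl).symm.lt_iff_lt

theorem equiv_fin_unique {α : Type*} {n : ℕ} (e₁ e₂ : α ≃ Fin n)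
    (h : ∀ a b : α, e₁ a < e₁ b ↔ e₂ a < e₂ b) : e₁ = e₂ := by
  have inst : WellFoundedLT (Fin n) := inferInstance
  have key : ∀ (f₁ f₂ : α ≃ Fin n), (∀ a b : α, f₁ a < f₁ b ↔ f₂ a < f₂ b) →
      ∀ a, f₁ a ≤ f₂ a := by
    intro f₁ f₂ hh a
    have hsm : StrictMono (⇑(f₁.symm.trans f₂)) := by
      intro i j hij
      exact (hh _ _).1 (by simpa using hij)
    have := @StrictMono.le_apply (Fin n) inferInstance inst _ hsm (x := f₁ a)
    simpa using this
  apply Equiv.ext; intro a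
  exact le_antisymm (key e₁ e₂ h a) (key e₂ e₁ (fun a b => (h a b).symm) a)

variable {P : Type} [PartialOrder P] [Fintype P] [DecidableEq P]
  (Q : P → Type) [∀ p, PartialOrder (Q p)] [∀ p, Fintype (Q p)]

noncomputable def fiberOrd (f : LinExt (Σₗ p, Q p)) (p : P) : LinearOrder (Q p) :=
  LinearOrder.lift' (fun q => f.1 ⟨p, q⟩)
    (fun _ _ h => sigma_mk_injective (f.1.injective h))

noncomputable def fiberEquiv (f : LinExt (Σₗ p, Q p)) (p : P) :
    Q p ≃ Fin (Fintype.card (Q p)) :=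
  rankEquiv (fiberOrd Q f p)

theorem fiberEquiv_lt_iff (f : LinExt (Σₗ p, Q p)) (p : P) (a b : Q p) :
    fiberEquiv Q f p a < fiberEquiv Q f p b ↔ f.1 ⟨p, a⟩ < f.1 ⟨p, b⟩ :=
  (rankEquiv_lt_iff (fiberOrd Q f p) a b).trans Iff.rfl

noncomputable def Phi (f : LinExt (Σₗ p, Q p)) (p : P) : LinExt (Q p) :=
  ⟨fiberEquiv Q f p, fun a b hab => (fiberEquiv_lt_iff Q f p a b).2
    (f.2 _ _ (Sigma.Lex.lt_def.2 (Or.inr ⟨rfl, hab⟩)))⟩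

noncomputable def Move (g : ∀ p, LinExt (Q p)) (f : LinExt (Σₗ p, Q p)) :
    LinExt (Σₗ p, Q p) :=
  ⟨((Equiv.sigmaCongrRight (fun p => (g p).1.trans (fiberEquiv Q f p).symm) :
      (Σ p, Q p) ≃ (Σ p, Q p)) : (Σₗ p, Q p) ≃ (Σₗ p, Q p)).trans f.1, by
    rintro ⟨px, qx⟩ ⟨py, qy⟩ hxy
    rcases Sigma.Lex.lt_def.1 hxy with hlt | ⟨heq, hlt⟩
    · exact f.2 _ _ (Sigma.Lex.lt_def.2 (Or.inl hlt))
    · dsimp only at heq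
      subst heq
      show f.1 ⟨px, (fiberEquiv Q f px).symm ((g px).1 qx)⟩ <
        f.1 ⟨px, (fiberEquiv Q f px).symm ((g px).1 qy)⟩
      apply (fiberEquiv_lt_iff Q f px _ _).1
      rw [Equiv.apply_symm_apply, Equiv.apply_symm_apply]
      exact (g px).2 _ _ hlt⟩

theorem Phi_Move (g : ∀ p, LinExt (Q p)) (f : LinExt (Σₗ p, Q p)) (p : P) :
    Phi Q (Move Q g f) p = g p := by
  apply Subtype.ext
  apply equiv_fin_unique
  intro a b
  refine (fiberEquiv_lt_iff Q (Move Q g f) p a b).trans ?_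
  show f.1 ⟨p, (fiberEquiv Q f p).symm ((g p).1 a)⟩ <
    f.1 ⟨p, (fiberEquiv Q f p).symm ((g p).1 b)⟩ ↔ (g p).1 a < (g p).1 b
  rw [← fiberEquiv_lt_iff Q f p, Equiv.apply_symm_apply, Equiv.apply_symm_apply]

theorem Move_self (f : LinExt (Σₗ p, Q p)) : Move Q (Phi Q f) f = f := by
  apply Subtype.ext
  apply Equiv.ext
  rintro ⟨p, q⟩
  show f.1 ⟨p, (fiberEquiv Q f p).symm (fiberEquiv Q f p q)⟩ = f.1 ⟨p, q⟩
  rw [Equiv.symm_apply_apply]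

theorem Move_Move (g g' : ∀ p, LinExt (Q p)) (f : LinExt (Σₗ p, Q p)) :
    Move Q g (Move Q g' f) = Move Q g f := by
  apply Subtype.ext
  apply Equiv.ext
  rintro ⟨p, q⟩
  have h1 : fiberEquiv Q (Move Q g' f) p = (g' p).1 :=
    congrArg Subtype.val (Phi_Move Q g' f p)
  show (Move Q g' f).1 ⟨p, (fiberEquiv Q (Move Q g' f) p).symm ((g p).1 q)⟩ =
    f.1 ⟨p, (fiberEquiv Q f p).symm ((g p).1 q)⟩
  rw [h1]
  show f.1 ⟨p, (fiberEquiv Q f p).symm ((g' p).1 ((g' p).1.symm ((g p).1 q)))⟩ = _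
  rw [Equiv.apply_symm_apply]

end LexSumAux

/-- `e(Q₁) ⋯ e(Qₙ)` divides `e(P(Q₁, …, Qₙ))`, where the lexicographic sum
`P(Q₁, …, Qₙ)` is modeled by the lexicographic order on `Σ p, Q p`. -/
theorem prod_numExt_dvd_numExt_lexSum (P : Type) [PartialOrder P] [Fintype P]
    [DecidableEq P] (Q : P → Type) [∀ p, PartialOrder (Q p)] [∀ p, Fintype (Q p)] :
    (∏ p : P, numExt (Q p)) ∣ numExt (Σₗ p, Q p) := by
  classical
  open LexSumAux in
  haveI : ∀ p, Nonempty (LinExt (Q p)) := fun p => linExt_nonempty' (Q p)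
  let g₀ : ∀ p, LinExt (Q p) := fun p => Classical.arbitrary _
  let E : LinExt (Σₗ p, Q p) ≃
      (∀ p, LinExt (Q p)) × {f : LinExt (Σₗ p, Q p) // ∀ p, LexSumAux.Phi Q f p = g₀ p} :=
  { toFun := fun f => ⟨LexSumAux.Phi Q f,
      ⟨LexSumAux.Move Q g₀ f, fun p => LexSumAux.Phi_Move Q g₀ f p⟩⟩
    invFun := fun x => LexSumAux.Move Q x.1 x.2.1
    left_inv := fun f => by
      show LexSumAux.Move Q (LexSumAux.Phi Q f) (LexSumAux.Move Q g₀ f) = f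
      rw [LexSumAux.Move_Move, LexSumAux.Move_self]
    right_inv := fun x => by
      obtain ⟨g, f₀, hf₀⟩ := x
      have hg₀ : g₀ = LexSumAux.Phi Q f₀ := funext fun p => (hf₀ p).symm
      refine Prod.ext ?_ ?_
      · funext p; exact LexSumAux.Phi_Move Q g f₀ p
      · apply Subtype.ext
        show LexSumAux.Move Q g₀ (LexSumAux.Move Q g f₀) = f₀
        rw [LexSumAux.Move_Move, hg₀, LexSumAux.Move_self] }
  have : numExt (Σₗ p, Q p) =
      (∏ p : P, numExt (Q p)) *
        Nat.card {f : LinExt (Σₗ p, Q p) // ∀ p, LexSumAux.Phi Q f p = g₀ p} := by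
    rw [numExt, Nat.card_congr E, Nat.card_prod, Nat.card_pi]
    rfl
  rw [this]
  exact dvd_mul_right _ _
end

section
/- Let P be a finite poset, i ∈ P, Q a finite poset, and x, y ∈ Q. Then the proportion of linear extensions f of P ∘_i Q with f(x) < f(y) equals the proportion of linear extensions g of Q with g(x) < g(y); that is, ℙ_{P∘_iQ}(x < y) = ℙ_Q(x < y). -/
open scoped Lex

namespace LexAtAux

open Finset

/-- Every finite poset has a linear extension. -/
noncomputable def linextMk (R : Type*) [PartialOrder R] [Fintype R] : LinExt R := by
  classical
  let fR : Fintype (LinearExtension R) := ‹Fintype R›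
  have hc : @Fintype.card (LinearExtension R) fR = Fintype.card R := rfl
  let e : Fin (Fintype.card R) ≃o LinearExtension R := @monoEquivOfFin _ fR _ _ hc
  refine ⟨show R ≃ Fin (Fintype.card R) from e.toEquiv.symm, ?_⟩
  intro a b hab
  have h1 : toLinearExtension a < toLinearExtension b := by
    refine lt_of_le_of_ne (toLinearExtension.monotone hab.le) ?_
    intro h
    exact hab.ne (show a = b from h)
  exact e.symm.strictMono h1

instance linextFinite (R : Type*) [PartialOrder R] [Fintype R] : Finite (LinExt R) := by
  classical
  exact Subtype.finite

variable {P Q : Type*} [PartialOrder P] [Fintype P] [DecidableEq P]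
  [PartialOrder Q] [Fintype Q] {i : P}

local notation "R" => LexAt P i Q
local notation "n" => Fintype.card (LexAt P i Q)
local notation "m" => Fintype.card Q

/-- Positions occupied by the `Q`-block. -/
def Spos (f : LinExt R) : Finset (Fin n) :=
  Finset.univ.image (fun q : Q => f.1 (Sum.inr q))

lemma mem_Spos (f : LinExt R) (q : Q) : f.1 (Sum.inr q) ∈ Spos f :=
  Finset.mem_image_of_mem _ (Finset.mem_univ q)

lemma Spos_eq (f : LinExt R) :
    Spos f = Finset.univ.image (fun q : Q => f.1 (Sum.inr q)) := rfl

lemma card_Spos (f : LinExt R) : (Spos f).card = m := by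
  rw [Spos_eq, Finset.card_image_of_injective _
    (fun a b h => Sum.inr_injective (f.1.injective h)), Finset.card_univ]

/-- The increasing enumeration of the `Q`-positions. -/
noncomputable def iotaF (f : LinExt R) : Fin m ≃o {v : Fin n // v ∈ Spos f} :=
  (Spos f).orderIsoOfFin (card_Spos f)

lemma iotaF_exists (f : LinExt R) (j : Fin m) :
    ∃ q : Q, (iotaF f j).1 = f.1 (Sum.inr q) := by
  have h : (iotaF f j).1 ∈ Finset.univ.image (fun q : Q => f.1 (Sum.inr q)) := (iotaF f j).2
  obtain ⟨q, _, hq⟩ := Finset.mem_image.1 h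
  exact ⟨q, hq.symm⟩

/-- `σ_f`: the relative order of the `Q`-block in `f`, a linear extension of `Q`. -/
noncomputable def sigmaF (f : LinExt R) : LinExt Q := by
  classical
  refine ⟨Equiv.ofBijective (fun q => (iotaF f).symm ⟨f.1 (Sum.inr q), mem_Spos f q⟩) ?_, ?_⟩
  · rw [Fintype.bijective_iff_injective_and_card]
    refine ⟨fun a b h => ?_, by simp⟩
    have := congrArg (iotaF f) h
    simp only [OrderIso.apply_symm_apply] at this
    exact Sum.inr_injective (f.1.injective (congrArg Subtype.val this))
  · intro a b hab
    have h1 : f.1 (Sum.inr a) < f.1 (Sum.inr b) := f.2 _ _ (by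
      refine lt_of_le_of_ne ?_ (fun h => hab.ne (Sum.inr_injective h))
      exact hab.le)
    simpa [Equiv.ofBijective] using (iotaF f).symm.strictMono
      (show (⟨f.1 (Sum.inr a), mem_Spos f a⟩ : {v : Fin n // v ∈ Spos f}) < ⟨f.1 (Sum.inr b), mem_Spos f b⟩ from h1)

lemma sigmaF_lt_iff (f : LinExt R) (a b : Q) :
    (sigmaF f).1 a < (sigmaF f).1 b ↔ f.1 (Sum.inr a) < f.1 (Sum.inr b) := by
  rw [show (sigmaF f).1 a = (iotaF f).symm ⟨f.1 (Sum.inr a), mem_Spos f a⟩ from rfl,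
    show (sigmaF f).1 b = (iotaF f).symm ⟨f.1 (Sum.inr b), mem_Spos f b⟩ from rfl,
    (iotaF f).symm.lt_iff_lt]
  exact Iff.rfl

/-- The underlying function of `reorder`. -/
noncomputable def reorderFun (f : LinExt R) (g : LinExt Q) : LexAt P i Q → Fin n
  | .inl a => f.1 (.inl a)
  | .inr q => (iotaF f (g.1 q)).1

@[simp] lemma reorderFun_inl (f : LinExt R) (g : LinExt Q) (a : {p : P // p ≠ i}) :
    reorderFun f g (.inl a) = f.1 (.inl a) := rfl

@[simp] lemma reorderFun_inr (f : LinExt R) (g : LinExt Q) (q : Q) :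
    reorderFun f g (.inr q) = (iotaF f (g.1 q)).1 := rfl

noncomputable def reorder (f : LinExt R) (g : LinExt Q) : LinExt R := by
  classical
  refine ⟨Equiv.ofBijective (reorderFun f g) ?_, ?_⟩
  · rw [Fintype.bijective_iff_injective_and_card]
    refine ⟨fun z w h => ?_, by simp⟩
    match z, w with
    | .inl a, .inl b =>
      simp only [reorderFun_inl] at h
      exact congrArg Sum.inl (Sum.inl_injective (f.1.injective h))
    | .inl a, .inr q =>
      exfalso
      simp only [reorderFun_inl, reorderFun_inr] at h
      obtain ⟨q₀, hq₀⟩ := iotaF_exists f (g.1 q)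
      rw [hq₀] at h
      exact Sum.inl_ne_inr (f.1.injective h)
    | .inr q, .inl b =>
      exfalso
      simp only [reorderFun_inl, reorderFun_inr] at h
      obtain ⟨q₀, hq₀⟩ := iotaF_exists f (g.1 q)
      rw [hq₀] at h
      exact Sum.inr_ne_inl (f.1.injective h)
    | .inr q, .inr q' =>
      simp only [reorderFun_inr] at h
      exact congrArg Sum.inr (g.1.injective ((iotaF f).injective (Subtype.ext h)))
  · intro z w hzw
    match z, w with
    | .inl a, .inl b => exact f.2 _ _ hzw
    | .inl a, .inr q =>
      obtain ⟨q₀, hq₀⟩ := iotaF_exists f (g.1 q)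
      show reorderFun f g (.inl a) < reorderFun f g (.inr q)
      rw [reorderFun_inl, reorderFun_inr, hq₀]
      refine f.2 _ _ (lt_of_le_of_ne ?_ Sum.inl_ne_inr)
      exact hzw.le
    | .inr q, .inl b =>
      obtain ⟨q₀, hq₀⟩ := iotaF_exists f (g.1 q)
      show reorderFun f g (.inr q) < reorderFun f g (.inl b)
      rw [reorderFun_inl, reorderFun_inr, hq₀]
      refine f.2 _ _ (lt_of_le_of_ne ?_ Sum.inr_ne_inl)
      exact hzw.le
    | .inr q, .inr q' =>
      have hq : q < q' := lt_of_le_of_ne hzw.le (fun h => hzw.ne (congrArg Sum.inr h))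
      show reorderFun f g (.inr q) < reorderFun f g (.inr q')
      rw [reorderFun_inr, reorderFun_inr]
      exact (iotaF f).strictMono (g.2 _ _ hq)

lemma reorder_inl (f : LinExt R) (g : LinExt Q) (a : {p : P // p ≠ i}) :
    (reorder f g).1 (.inl a) = f.1 (.inl a) := rfl

lemma reorder_inr (f : LinExt R) (g : LinExt Q) (q : Q) :
    (reorder f g).1 (.inr q) = (iotaF f (g.1 q)).1 := rfl

lemma Spos_reorder (f : LinExt R) (g : LinExt Q) : Spos (reorder f g) = Spos f := by
  ext v
  rw [Spos_eq, Spos_eq]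
  simp only [Finset.mem_image, Finset.mem_univ, true_and]
  constructor
  · rintro ⟨q, hq⟩
    rw [reorder_inr] at hq
    obtain ⟨q₀, hq₀⟩ := iotaF_exists f (g.1 q)
    exact ⟨q₀, by rw [← hq₀, hq]⟩
  · rintro ⟨q, hq⟩
    refine ⟨g.1.symm ((iotaF f).symm ⟨f.1 (Sum.inr q), mem_Spos f q⟩), ?_⟩
    rw [reorder_inr]
    simp [hq]

lemma orderIsoOfFin_val_congr {α : Type*} [LinearOrder α] {s t : Finset α} (h : s = t)
    {k : ℕ} (hs : s.card = k) (ht : t.card = k) (j : Fin k) :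
    (s.orderIsoOfFin hs j).1 = (t.orderIsoOfFin ht j).1 := by subst h; rfl

lemma iotaF_congr (f f' : LinExt R) (h : Spos f' = Spos f) (j : Fin m) :
    (iotaF f' j).1 = (iotaF f j).1 :=
  orderIsoOfFin_val_congr h _ _ j

lemma reorder_inr' (f : LinExt R) (g : LinExt Q) (q : Q) :
    (reorder f g).1 (.inr q) = (iotaF (reorder f g) (g.1 q)).1 := by
  rw [reorder_inr]
  exact (iotaF_congr f (reorder f g) (Spos_reorder f g) (g.1 q)).symm

lemma sigmaF_reorder (f : LinExt R) (g : LinExt Q) : sigmaF (reorder f g) = g := by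
  apply Subtype.ext
  apply Equiv.ext
  intro q
  apply (iotaF (reorder f g)).injective
  apply Subtype.ext
  show (iotaF (reorder f g) ((sigmaF (reorder f g)).1 q)).1 = (iotaF (reorder f g) (g.1 q)).1
  rw [show (iotaF (reorder f g)) ((sigmaF (reorder f g)).1 q) = ⟨(reorder f g).1 (Sum.inr q), mem_Spos _ q⟩ from (iotaF (reorder f g)).apply_symm_apply _]
  exact reorder_inr' f g q

lemma reorder_reorder (f : LinExt R) (g : LinExt Q) :
    reorder (reorder f g) (sigmaF f) = f := by
  apply Subtype.ext
  apply Equiv.ext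
  intro z
  match z with
  | .inl a => rfl
  | .inr q =>
    rw [reorder_inr, iotaF_congr f (reorder f g) (Spos_reorder f g)]
    show ((iotaF f) ((iotaF f).symm ⟨f.1 (Sum.inr q), mem_Spos f q⟩)).1 = f.1 (Sum.inr q)
    rw [OrderIso.apply_symm_apply]

lemma reorder_lt_iff (f : LinExt R) (g : LinExt Q) (a b : Q) :
    (reorder f g).1 (Sum.inr a) < (reorder f g).1 (Sum.inr b) ↔ g.1 a < g.1 b := by
  rw [reorder_inr, reorder_inr]
  exact ⟨fun h => (iotaF f).lt_iff_lt.1 h, fun h => (iotaF f).strictMono h⟩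

end LexAtAux


/-- for `x, y ∈ Q`, `ℙ_{P∘ᵢQ}(x < y) = ℙ_Q(x < y)`. -/
theorem probBelow_lexAt (P Q : Type) [PartialOrder P] [Fintype P] [DecidableEq P]
    [PartialOrder Q] [Fintype Q] (i : P) (x y : Q) :
    probBelow (LexAt P i Q) (Sum.inr x) (Sum.inr y) = probBelow Q x y := by
  classical
  have hR : Nonempty (LinExt (LexAt P i Q)) := ⟨LexAtAux.linextMk _⟩
  have hQ : Nonempty (LinExt Q) := ⟨LexAtAux.linextMk _⟩
  have hR0 : (numExt (LexAt P i Q) : ℚ) ≠ 0 := by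
    exact_mod_cast (Nat.card_pos (α := LinExt (LexAt P i Q))).ne'
  have hQ0 : (numExt Q : ℚ) ≠ 0 := by
    exact_mod_cast (Nat.card_pos (α := LinExt Q)).ne'
  have e : ({f : LinExt (LexAt P i Q) // f.1 (Sum.inr x) < f.1 (Sum.inr y)} × LinExt Q)
      ≃ (LinExt (LexAt P i Q) × {g : LinExt Q // g.1 x < g.1 y}) :=
    { toFun := fun p => (LexAtAux.reorder p.1.1 p.2,
        ⟨LexAtAux.sigmaF p.1.1, (LexAtAux.sigmaF_lt_iff p.1.1 x y).2 p.1.2⟩)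
      invFun := fun p => (⟨LexAtAux.reorder p.1 p.2.1,
        (LexAtAux.reorder_lt_iff p.1 p.2.1 x y).2 p.2.2⟩, LexAtAux.sigmaF p.1)
      left_inv := fun p => by
        refine Prod.ext ?_ ?_
        · exact Subtype.ext (LexAtAux.reorder_reorder p.1.1 p.2)
        · exact LexAtAux.sigmaF_reorder p.1.1 p.2
      right_inv := fun p => by
        refine Prod.ext ?_ ?_
        · exact LexAtAux.reorder_reorder p.1 p.2.1
        · exact Subtype.ext (LexAtAux.sigmaF_reorder p.1 p.2.1) }
  have key : numBelow (LexAt P i Q) (Sum.inr x) (Sum.inr y) * numExt Q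
      = numExt (LexAt P i Q) * numBelow Q x y := by
    unfold numBelow numExt
    rw [← Nat.card_prod, ← Nat.card_prod]
    exact Nat.card_congr e
  unfold probBelow
  rw [div_eq_div_iff hR0 hQ0]
  exact_mod_cast key.trans (mul_comm _ _) |>.trans rfl
end

section
/- Let P be a finite poset with n elements and Q₁,…,Qₙ finite posets. Then δ(P(Q₁,…,Qₙ)) ≥ max over 1 ≤ i ≤ n of δ(Qᵢ), where δ(R) = max over pairs x,y ∈ R of min{ℙ_R(x<y), ℙ_R(y<x)}. -/
open scoped Lex

/-! ### Auxiliary development -/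

section AuxLinExt

instance LinExt.finite (R : Type*) [PartialOrder R] [Fintype R] : Finite (LinExt R) :=
  inferInstanceAs (Finite {f : R ≃ Fin (Fintype.card R) // ∀ x y : R, x < y → f x < f y})

lemma linExt_nonempty (R : Type*) [PartialOrder R] [Fintype R] : Nonempty (LinExt R) := by
  letI : Fintype (LinearExtension R) := ‹Fintype R›
  let e := monoEquivOfFin (LinearExtension R)
    (rfl : Fintype.card (LinearExtension R) = Fintype.card R)
  refine ⟨⟨(Equiv.refl R : R ≃ LinearExtension R).trans e.toEquiv.symm, fun x y h => ?_⟩⟩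
  have h1 : toLinearExtension x < toLinearExtension y :=
    lt_of_le_of_ne (toLinearExtension.monotone h.le)
      (fun c => h.ne (congrArg (fun z : LinearExtension R => (z : R)) c))
  exact e.symm.strictMono h1

lemma numExt_pos (R : Type*) [PartialOrder R] [Fintype R] : 0 < numExt R := by
  haveI := linExt_nonempty R
  exact Nat.card_pos

lemma delta_nonneg (R : Type*) [PartialOrder R] [Fintype R] [DecidableEq R] : 0 ≤ delta R :=
  (Finset.le_fold_max _).2 (Or.inl le_rfl)

lemma equiv_fin_eq_of_lt_iff {α : Type*} {m : ℕ} (e₁ e₂ : α ≃ Fin m)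
    (h : ∀ a b, e₁ a < e₁ b ↔ e₂ a < e₂ b) : e₁ = e₂ := by
  have hsm : StrictMono (e₂.symm.trans e₁ : Fin m → Fin m) := by
    intro a b hab
    exact (h _ _).2 (by simpa using hab)
  have hr : Set.range (e₂.symm.trans e₁ : Fin m → Fin m) = Set.range (id : Fin m → Fin m) := by
    simp [Equiv.range_eq_univ]
  letI : WellFoundedLT (Fin m) := inferInstance
  have := (hsm.range_inj strictMono_id).1 hr
  exact Equiv.ext fun a => by simpa using congrFun this (e₂ a)

def sndSubtypeEquiv {α β : Type*} {q : β → Prop} : {s : α × β // q s.2} ≃ α × {b // q b} where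
  toFun x := (x.1.1, ⟨x.1.2, x.2⟩)
  invFun x := ⟨(x.1, x.2.1), x.2.2⟩
  left_inv _ := rfl
  right_inv _ := rfl

end AuxLinExt

section AuxSigma
set_option linter.unusedSectionVars false

variable {P : Type} [PartialOrder P] [Fintype P] [DecidableEq P]
  {Q : P → Type} [∀ p, PartialOrder (Q p)] [∀ p, Fintype (Q p)] [∀ p, DecidableEq (Q p)]

lemma lex_fiber_lt_iff {j : P} {q q' : Q j} :
    (toLex ⟨j, q⟩ : Σₗ p, Q p) < toLex ⟨j, q'⟩ ↔ q < q' := by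
  rw [Sigma.Lex.lt_def]
  constructor
  · rintro (h | ⟨h, h2⟩)
    · exact absurd h (lt_irrefl j)
    · exact h2
  · intro h; exact Or.inr ⟨rfl, h⟩

lemma mk_inj (j : P) : Function.Injective (fun q : Q j => (toLex ⟨j, q⟩ : Σₗ p, Q p)) := by
  intro a b h
  simpa using congrArg ofLex h

lemma comp_inj (j : P) (f : LinExt (Σₗ p, Q p)) :
    Function.Injective (fun q : Q j => f.1 (toLex ⟨j, q⟩)) :=
  fun a b h => mk_inj j (f.1.injective h)

noncomputable def rEquiv (j : P) (f : LinExt (Σₗ p, Q p)) : Q j ≃ Fin (Fintype.card (Q j)) :=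
  let s : Finset (Fin (Fintype.card (Σₗ p, Q p))) :=
    Finset.image (fun q : Q j => f.1 (toLex ⟨j, q⟩)) Finset.univ
  have hs : s.card = Fintype.card (Q j) := by
    rw [Finset.card_image_of_injective _ (comp_inj j f)]; exact Finset.card_univ
  have hbij : Function.Bijective (fun q : Q j =>
      (⟨f.1 (toLex ⟨j, q⟩), Finset.mem_image_of_mem _ (Finset.mem_univ q)⟩ : s)) :=
    ⟨fun a b h => comp_inj j f (congrArg Subtype.val h), by
      rintro ⟨x, hx⟩
      obtain ⟨q, -, rfl⟩ := Finset.mem_image.1 hx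
      exact ⟨q, rfl⟩⟩
  (Equiv.ofBijective _ hbij).trans (s.orderIsoOfFin hs).symm.toEquiv

lemma rEquiv_lt_iff (j : P) (f : LinExt (Σₗ p, Q p)) (a b : Q j) :
    rEquiv j f a < rEquiv j f b ↔ f.1 (toLex ⟨j, a⟩) < f.1 (toLex ⟨j, b⟩) := by
  simp only [rEquiv, Equiv.trans_apply, RelIso.coe_fn_toEquiv]
  rw [OrderIso.lt_iff_lt]
  exact Iff.rfl

noncomputable def restrictExt (j : P) (f : LinExt (Σₗ p, Q p)) : LinExt (Q j) :=
  ⟨rEquiv j f, fun x y h => (rEquiv_lt_iff j f x y).2 (f.2 _ _ (lex_fiber_lt_iff.2 h))⟩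

lemma lex_lt_of_fst_lt {i j : P} (h : i < j) (a : Q i) (b : Q j) :
    (toLex ⟨i, a⟩ : Σₗ p, Q p) < toLex ⟨j, b⟩ :=
  Sigma.Lex.lt_def.2 (Or.inl h)

def fibEquiv (j : P) (σ : Q j ≃ Q j) (p : P) : Q p ≃ Q p :=
  if h : p = j then by subst h; exact σ else Equiv.refl _

@[simp] lemma fibEquiv_j (j : P) (σ : Q j ≃ Q j) : fibEquiv j σ j = σ := by
  simp [fibEquiv]

lemma fibEquiv_ne (j : P) (σ : Q j ≃ Q j) {p : P} (h : p ≠ j) :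
    fibEquiv (Q := Q) j σ p = Equiv.refl _ := by
  simp [fibEquiv, h]

def sigmaMap (j : P) (σ : Q j ≃ Q j) : (Σₗ p, Q p) ≃ (Σₗ p, Q p) :=
  (ofLex : (Σₗ p, Q p) ≃ (Σ p, Q p)).trans
    ((Equiv.sigmaCongrRight (fibEquiv j σ)).trans (toLex : (Σ p, Q p) ≃ (Σₗ p, Q p)))

lemma sigmaMap_apply (j : P) (σ : Q j ≃ Q j) (p : P) (a : Q p) :
    sigmaMap j σ (toLex ⟨p, a⟩) = toLex ⟨p, fibEquiv j σ p a⟩ := rfl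

noncomputable def rearr (j : P) (g : LinExt (Q j)) (f : LinExt (Σₗ p, Q p)) :
    LinExt (Σₗ p, Q p) := by
  refine ⟨(sigmaMap j (g.1.trans (rEquiv j f).symm)).trans f.1, ?_⟩
  intro s t hst
  obtain ⟨p, a⟩ := s
  obtain ⟨p', b⟩ := t
  show f.1 (sigmaMap j (g.1.trans (rEquiv j f).symm) ⟨p, a⟩) <
    f.1 (sigmaMap j (g.1.trans (rEquiv j f).symm) ⟨p', b⟩)
  replace hst := Sigma.Lex.lt_def.1 hst
  obtain h | ⟨h, h2⟩ := hst
  · exact f.2 _ _ (lex_lt_of_fst_lt h _ _)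
  · dsimp only at h
    subst h
    dsimp only at h2
    rw [show (⟨p, a⟩ : Σₗ p, Q p) = toLex ⟨p, a⟩ from rfl,
      show (⟨p, b⟩ : Σₗ p, Q p) = toLex ⟨p, b⟩ from rfl, sigmaMap_apply, sigmaMap_apply]
    by_cases hp : p = j
    · subst hp
      rw [fibEquiv_j, ← rEquiv_lt_iff p f]
      simpa using g.2 _ _ h2
    · rw [fibEquiv_ne j _ hp]
      exact f.2 _ _ (lex_fiber_lt_iff.2 h2)

lemma rearr_apply_j (j : P) (g : LinExt (Q j)) (f : LinExt (Σₗ p, Q p)) (q : Q j) :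
    (rearr j g f).1 (toLex ⟨j, q⟩) = f.1 (toLex ⟨j, (rEquiv j f).symm (g.1 q)⟩) := by
  simp only [rearr, Equiv.trans_apply, sigmaMap_apply, fibEquiv_j]

lemma rearr_apply_ne (j : P) (g : LinExt (Q j)) (f : LinExt (Σₗ p, Q p)) {p : P}
    (h : p ≠ j) (a : Q p) :
    (rearr j g f).1 (toLex ⟨p, a⟩) = f.1 (toLex ⟨p, a⟩) := by
  simp only [rearr, Equiv.trans_apply, sigmaMap_apply, fibEquiv_ne j _ h, Equiv.refl_apply]

lemma rEquiv_rearr (j : P) (g : LinExt (Q j)) (f : LinExt (Σₗ p, Q p)) :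
    rEquiv j (rearr j g f) = g.1 := by
  apply equiv_fin_eq_of_lt_iff
  intro a b
  rw [rEquiv_lt_iff, rearr_apply_j, rearr_apply_j, ← rEquiv_lt_iff j f]
  simp

lemma restrict_rearr (j : P) (g : LinExt (Q j)) (f : LinExt (Σₗ p, Q p)) :
    restrictExt j (rearr j g f) = g :=
  Subtype.ext (rEquiv_rearr j g f)

lemma rearr_rearr (j : P) (g : LinExt (Q j)) (f : LinExt (Σₗ p, Q p)) :
    rearr j (restrictExt j f) (rearr j g f) = f := by
  apply Subtype.ext
  apply Equiv.ext
  intro s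
  obtain ⟨p, a⟩ := s
  by_cases hp : p = j
  · subst hp
    rw [show (⟨p, a⟩ : Σₗ p, Q p) = toLex ⟨p, a⟩ from rfl, rearr_apply_j]
    have h1 : (rEquiv p (rearr p g f)).symm = g.1.symm := by rw [rEquiv_rearr]
    rw [h1, rearr_apply_j]
    simp [restrictExt]
  · rw [show (⟨p, a⟩ : Σₗ p, Q p) = toLex ⟨p, a⟩ from rfl, rearr_apply_ne _ _ _ hp,
      rearr_apply_ne _ _ _ hp]

noncomputable def keyEquiv (j : P) (x y : Q j) :
    {p : LinExt (Σₗ p, Q p) × LinExt (Q j) //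
        p.1.1 (toLex ⟨j, x⟩) < p.1.1 (toLex ⟨j, y⟩)} ≃
    {p : LinExt (Σₗ p, Q p) × LinExt (Q j) // p.2.1 x < p.2.1 y} where
  toFun p := ⟨(rearr j p.1.2 p.1.1, restrictExt j p.1.1), by
    show rEquiv j p.1.1 x < rEquiv j p.1.1 y
    exact (rEquiv_lt_iff j p.1.1 x y).2 p.2⟩
  invFun p := ⟨(rearr j p.1.2 p.1.1, restrictExt j p.1.1), by
    show (rearr j p.1.2 p.1.1).1 (toLex ⟨j, x⟩) < (rearr j p.1.2 p.1.1).1 (toLex ⟨j, y⟩)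
    rw [rearr_apply_j, rearr_apply_j, ← rEquiv_lt_iff j p.1.1]
    simpa using p.2⟩
  left_inv p := Subtype.ext (Prod.ext (rearr_rearr j p.1.2 p.1.1) (restrict_rearr j p.1.2 p.1.1))
  right_inv p := Subtype.ext (Prod.ext (rearr_rearr j p.1.2 p.1.1) (restrict_rearr j p.1.2 p.1.1))

lemma numBelow_mul (j : P) (x y : Q j) :
    numBelow (Σₗ p, Q p) (toLex ⟨j, x⟩) (toLex ⟨j, y⟩) * numExt (Q j) =
      numExt (Σₗ p, Q p) * numBelow (Q j) x y := by
  have h1 : numBelow (Σₗ p, Q p) (toLex ⟨j, x⟩) (toLex ⟨j, y⟩) * numExt (Q j) =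
      Nat.card {p : LinExt (Σₗ p, Q p) × LinExt (Q j) //
        p.1.1 (toLex ⟨j, x⟩) < p.1.1 (toLex ⟨j, y⟩)} := by
    rw [Nat.card_congr (Equiv.prodSubtypeFstEquivSubtypeProd
      (p := fun f : LinExt (Σₗ p, Q p) => f.1 (toLex ⟨j, x⟩) < f.1 (toLex ⟨j, y⟩))),
      Nat.card_prod]
    rfl
  have h2 : numExt (Σₗ p, Q p) * numBelow (Q j) x y =
      Nat.card {p : LinExt (Σₗ p, Q p) × LinExt (Q j) // p.2.1 x < p.2.1 y} := by
    rw [Nat.card_congr (sndSubtypeEquiv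
      (q := fun g : LinExt (Q j) => g.1 x < g.1 y)), Nat.card_prod]
    rfl
  rw [h1, h2, Nat.card_congr (keyEquiv j x y)]

lemma prob_eq (j : P) (x y : Q j) :
    probBelow (Σₗ p, Q p) (toLex ⟨j, x⟩) (toLex ⟨j, y⟩) = probBelow (Q j) x y := by
  have h := numBelow_mul j x y
  have hS : (0 : ℚ) < (numExt (Σₗ p, Q p) : ℚ) := by exact_mod_cast numExt_pos _
  have hQ : (0 : ℚ) < (numExt (Q j) : ℚ) := by exact_mod_cast numExt_pos (Q j)
  rw [probBelow, probBelow, div_eq_div_iff hS.ne' hQ.ne']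
  exact_mod_cast h.trans (mul_comm _ _)

end AuxSigma

/-- `δ(P(Q₁,…,Qₙ)) ≥ max_i δ(Qᵢ)`, i.e. `δ(Qⱼ) ≤ δ` of the lexicographic
sum for every `j`. -/
theorem delta_lexSum_ge (P : Type) [PartialOrder P] [Fintype P] [DecidableEq P]
    (Q : P → Type) [∀ p, PartialOrder (Q p)] [∀ p, Fintype (Q p)] [∀ p, DecidableEq (Q p)]
    (j : P) :
    delta (Q j) ≤ delta (Σₗ p, Q p) := by
  
  rw [delta, Finset.fold_max_le]
  refine ⟨delta_nonneg _, ?_⟩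
  rintro ⟨x, y⟩ -
  dsimp only
  by_cases hxy : x = y
  · rw [if_pos hxy]; exact delta_nonneg _
  · rw [if_neg hxy, ← prob_eq j x y, ← prob_eq j y x]
    refine (Finset.le_fold_max _).2 (Or.inr ⟨(toLex ⟨j, x⟩, toLex ⟨j, y⟩), Finset.mem_univ _, ?_⟩)
    rw [if_neg (fun h => hxy (mk_inj j h))]
end

section
/- Let Q be a finite poset satisfying the GPC with witnessing consecutive comparisons (x₁,y₁) and, for each outcome of the first comparison, a second comparison, such that e(Q) > t₁ + t₂ for every outcome. Let P be a finite poset, i ∈ P, and let k = e(P ∘_i Q)/e(Q). Then, applying the same comparisons inside the copy of Q in P ∘_i Q, the resulting counts satisfy t₀′ = k·t₀, t₁′ = k·t₁, and t₂′ = k·t₂. -/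
open scoped Lex

section BlockDecomposition

variable {P Q : Type} [PartialOrder P] [Fintype P] [DecidableEq P]
  [PartialOrder Q] [Fintype Q] {i : P}

instance LinExt.instFinite (R : Type*) [PartialOrder R] [Fintype R] : Finite (LinExt R) := by
  unfold LinExt; infer_instance

lemma LexAt.inl_le_inr_iff (p : {x : P // x ≠ i}) (q : Q) :
    @LE.le (LexAt P i Q) _ (Sum.inl p) (Sum.inr q) ↔ p.1 < i := Iff.rfl

lemma LexAt.inr_le_inl_iff (p : {x : P // x ≠ i}) (q : Q) :
    @LE.le (LexAt P i Q) _ (Sum.inr q) (Sum.inl p) ↔ i < p.1 := Iff.rfl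

lemma LexAt.inr_le_inr_iff (q q' : Q) :
    @LE.le (LexAt P i Q) _ (Sum.inr q) (Sum.inr q') ↔ q ≤ q' := Iff.rfl

lemma LexAt.inl_lt_inr_iff (p : {x : P // x ≠ i}) (q : Q) :
    @LT.lt (LexAt P i Q) _ (Sum.inl p) (Sum.inr q) ↔ p.1 < i := by
  rw [@lt_iff_le_not_ge (LexAt P i Q) _ (Sum.inl p) (Sum.inr q), LexAt.inl_le_inr_iff, LexAt.inr_le_inl_iff]
  exact ⟨fun h => h.1, fun h => ⟨h, fun h' => absurd (h.trans h') (lt_irrefl _)⟩⟩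

lemma LexAt.inr_lt_inl_iff (p : {x : P // x ≠ i}) (q : Q) :
    @LT.lt (LexAt P i Q) _ (Sum.inr q) (Sum.inl p) ↔ i < p.1 := by
  rw [@lt_iff_le_not_ge (LexAt P i Q) _ (Sum.inr q) (Sum.inl p), LexAt.inr_le_inl_iff, LexAt.inl_le_inr_iff]
  exact ⟨fun h => h.1, fun h => ⟨h, fun h' => absurd (h'.trans h) (lt_irrefl _)⟩⟩

lemma LexAt.inr_lt_inr_iff (q q' : Q) :
    @LT.lt (LexAt P i Q) _ (Sum.inr q) (Sum.inr q') ↔ q < q' := by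
  rw [@lt_iff_le_not_ge (LexAt P i Q) _ (Sum.inr q) (Sum.inr q'), LexAt.inr_le_inr_iff, LexAt.inr_le_inr_iff, lt_iff_le_not_ge]

/-- The set of positions occupied by the copy of `Q`. -/
noncomputable def Sset (f : LinExt (LexAt P i Q)) :
    Finset (Fin (Fintype.card (LexAt P i Q))) :=
  Finset.univ.image (fun q : Q => f.1 (Sum.inr q))

lemma mem_Sset (f : LinExt (LexAt P i Q)) (q : Q) : f.1 (Sum.inr q) ∈ Sset f :=
  Finset.mem_image_of_mem _ (Finset.mem_univ q)

lemma Sset_card (f : LinExt (LexAt P i Q)) : (Sset f).card = Fintype.card Q := by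
  have hinj : Function.Injective (fun q : Q => f.1 (Sum.inr q)) :=
    fun x y h => Sum.inr_injective (f.1.injective h)
  unfold Sset
  rw [Finset.card_image_of_injective _ hinj, Finset.card_univ]

/-- The order isomorphism between `Fin |Q|` and the positions of `Q`. -/
noncomputable def iotaS (f : LinExt (LexAt P i Q)) :
    Fin (Fintype.card Q) ≃o {x // x ∈ Sset f} :=
  Finset.orderIsoOfFin _ (Sset_card f)

lemma iotaS_mem_exists (f : LinExt (LexAt P i Q)) (j : Fin (Fintype.card Q)) :
    ∃ q : Q, f.1 (Sum.inr q) = (iotaS f j : Fin (Fintype.card (LexAt P i Q))) := by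
  have h2 := (iotaS f j).2
  unfold Sset at h2
  rw [Finset.mem_image] at h2
  obtain ⟨q, _, hq⟩ := h2
  exact ⟨q, hq⟩

noncomputable def restrQfun (f : LinExt (LexAt P i Q)) : Q → Fin (Fintype.card Q) :=
  fun q => (iotaS f).symm ⟨f.1 (Sum.inr q), mem_Sset f q⟩

lemma restrQfun_inj (f : LinExt (LexAt P i Q)) : Function.Injective (restrQfun f) := by
  intro x y h
  have h2 := (iotaS f).symm.injective h
  exact Sum.inr_injective (f.1.injective (Subtype.ext_iff.mp h2))

lemma restrQfun_lt_iff (f : LinExt (LexAt P i Q)) (x y : Q) :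
    restrQfun f x < restrQfun f y ↔ f.1 (Sum.inr x) < f.1 (Sum.inr y) := by
  unfold restrQfun
  rw [(iotaS f).symm.lt_iff_lt, Subtype.mk_lt_mk]

/-- Restriction of a linear extension of `P ∘ᵢ Q` to the copy of `Q`. -/
noncomputable def restrQ (f : LinExt (LexAt P i Q)) : LinExt Q :=
  ⟨Equiv.ofBijective (restrQfun f)
      ((Fintype.bijective_iff_injective_and_card (restrQfun f)).mpr
        ⟨restrQfun_inj f, (Fintype.card_fin _).symm⟩),
    fun x y h => (restrQfun_lt_iff f x y).mpr
      (f.2 _ _ ((LexAt.inr_lt_inr_iff x y).mpr h))⟩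

lemma restrQ_apply (f : LinExt (LexAt P i Q)) (q : Q) : (restrQ f).1 q = restrQfun f q := rfl

lemma restrQ_lt_iff (f : LinExt (LexAt P i Q)) (x y : Q) :
    (restrQ f).1 x < (restrQ f).1 y ↔ f.1 (Sum.inr x) < f.1 (Sum.inr y) := by
  rw [restrQ_apply, restrQ_apply, restrQfun_lt_iff]

/-- A linear extension of `Q` with the same order behaviour as the restriction of `f`
equals the restriction of `f`. -/
lemma restrQ_eq_of_iff (f : LinExt (LexAt P i Q)) (h : LinExt Q)
    (H : ∀ x y : Q, h.1 x < h.1 y ↔ f.1 (Sum.inr x) < f.1 (Sum.inr y)) : restrQ f = h := by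
  have key : ∀ x y : Q, (restrQ f).1 x < (restrQ f).1 y ↔ h.1 x < h.1 y := by
    intro x y; rw [restrQ_lt_iff, H]
  set g : Fin (Fintype.card Q) → Fin (Fintype.card Q) := fun j => (restrQ f).1 (h.1.symm j)
    with hg
  have hsm : StrictMono g := by
    intro x y hxy
    rw [hg]
    rw [key]
    simpa using hxy
  have hid : StrictMono (id : Fin (Fintype.card Q) → Fin (Fintype.card Q)) := strictMono_id
  have hrange : Set.range g = Set.range (id : Fin (Fintype.card Q) → Fin (Fintype.card Q)) := by
    rw [Set.range_id, hg]
    have : Function.Surjective (fun j => (restrQ f).1 (h.1.symm j)) :=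
      (restrQ f).1.surjective.comp h.1.symm.surjective
    exact Set.range_eq_univ.mpr this
  haveI hw : WellFoundedLT (Fin (Fintype.card Q)) := inferInstance
  have heq := (@StrictMono.range_inj (Fin (Fintype.card Q)) (Fin (Fintype.card Q)) _ _ hw
    g id hsm hid).mp hrange
  apply Subtype.ext; apply Equiv.ext; intro q
  have h3 := congrFun heq (h.1 q)
  rw [hg] at h3
  simpa using h3

noncomputable def replaceQfun (f : LinExt (LexAt P i Q)) (h : LinExt Q) :
    LexAt P i Q → Fin (Fintype.card (LexAt P i Q)) := fun x =>
  match x with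
  | .inl p => f.1 (Sum.inl p)
  | .inr q => (iotaS f (h.1 q) : Fin (Fintype.card (LexAt P i Q)))

lemma replaceQfun_inj (f : LinExt (LexAt P i Q)) (h : LinExt Q) :
    Function.Injective (replaceQfun f h) := by
  rintro (p | q) (p' | q') hxy
  · exact congrArg Sum.inl (Sum.inl_injective (f.1.injective hxy))
  · exfalso
    obtain ⟨q'', hq''⟩ := iotaS_mem_exists f (h.1 q')
    exact Sum.inl_ne_inr (f.1.injective ((hxy : f.1 (Sum.inl p) = _).trans hq''.symm))
  · exfalso
    obtain ⟨q'', hq''⟩ := iotaS_mem_exists f (h.1 q)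
    exact Sum.inl_ne_inr (f.1.injective (((hxy : _ = f.1 (Sum.inl p')).symm).trans hq''.symm))
  · exact congrArg Sum.inr (h.1.injective ((iotaS f).injective (Subtype.ext hxy)))

lemma replaceQfun_mono (f : LinExt (LexAt P i Q)) (h : LinExt Q) :
    ∀ x y : LexAt P i Q, x < y → replaceQfun f h x < replaceQfun f h y := by
  rintro (p | q) (p' | q') hxy
  · exact f.2 _ _ hxy
  · obtain ⟨q'', hq''⟩ := iotaS_mem_exists f (h.1 q')
    have he : replaceQfun f h (Sum.inr q') = f.1 (Sum.inr q'') := hq''.symm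
    show f.1 (Sum.inl p) < replaceQfun f h (Sum.inr q')
    rw [he]
    exact f.2 _ _ ((LexAt.inl_lt_inr_iff p q'').mpr ((LexAt.inl_lt_inr_iff p q').mp hxy))
  · obtain ⟨q'', hq''⟩ := iotaS_mem_exists f (h.1 q)
    have he : replaceQfun f h (Sum.inr q) = f.1 (Sum.inr q'') := hq''.symm
    show replaceQfun f h (Sum.inr q) < f.1 (Sum.inl p')
    rw [he]
    exact f.2 _ _ ((LexAt.inr_lt_inl_iff p' q'').mpr ((LexAt.inr_lt_inl_iff p' q).mp hxy))
  · exact Subtype.coe_lt_coe.mpr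
      ((iotaS f).lt_iff_lt.mpr (h.2 _ _ ((LexAt.inr_lt_inr_iff q q').mp hxy)))

/-- Replace the `Q`-part of `f` by the linear extension `h` of `Q`, keeping positions. -/
noncomputable def replaceQ (f : LinExt (LexAt P i Q)) (h : LinExt Q) :
    LinExt (LexAt P i Q) :=
  ⟨Equiv.ofBijective (replaceQfun f h)
      ((Fintype.bijective_iff_injective_and_card (replaceQfun f h)).mpr
        ⟨replaceQfun_inj f h, (Fintype.card_fin _).symm⟩),
    replaceQfun_mono f h⟩

lemma replaceQ_apply_inl (f : LinExt (LexAt P i Q)) (h : LinExt Q) (p : {x : P // x ≠ i}) :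
    (replaceQ f h).1 (Sum.inl p) = f.1 (Sum.inl p) := rfl

lemma replaceQ_apply_inr (f : LinExt (LexAt P i Q)) (h : LinExt Q) (q : Q) :
    (replaceQ f h).1 (Sum.inr q) = (iotaS f (h.1 q) : Fin _) := rfl

lemma restrQ_replaceQ (f : LinExt (LexAt P i Q)) (h : LinExt Q) :
    restrQ (replaceQ f h) = h := by
  apply restrQ_eq_of_iff
  intro x y
  rw [replaceQ_apply_inr, replaceQ_apply_inr, Subtype.coe_lt_coe, (iotaS f).lt_iff_lt]

lemma replaceQ_restrQ (f : LinExt (LexAt P i Q)) : replaceQ f (restrQ f) = f := by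
  apply Subtype.ext; apply Equiv.ext
  rintro (p | q)
  · rfl
  · rw [replaceQ_apply_inr, restrQ_apply]
    have he : iotaS f (restrQfun f q) = ⟨f.1 (Sum.inr q), mem_Sset f q⟩ :=
      (iotaS f).apply_symm_apply _
    rw [he]

lemma Sset_replaceQ (f : LinExt (LexAt P i Q)) (h : LinExt Q) :
    Sset (replaceQ f h) = Sset f := by
  apply Finset.ext; intro x
  unfold Sset
  simp only [Finset.mem_image, Finset.mem_univ, true_and]
  constructor
  · rintro ⟨q, hq⟩
    rw [replaceQ_apply_inr] at hq
    obtain ⟨q', hq'⟩ := iotaS_mem_exists f (h.1 q)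
    exact ⟨q', hq'.trans hq⟩
  · rintro ⟨q, hq⟩
    refine ⟨h.1.symm ((iotaS f).symm ⟨x, hq ▸ mem_Sset f q⟩), ?_⟩
    rw [replaceQ_apply_inr, h.1.apply_symm_apply, (iotaS f).apply_symm_apply]

lemma orderIso_coe_congr {n N : ℕ} {s t : Finset (Fin N)} (hst : s = t)
    (hs : s.card = n) (ht : t.card = n) (j : Fin n) :
    ((s.orderIsoOfFin hs j : {x // x ∈ s}) : Fin N) = ((t.orderIsoOfFin ht j : {x // x ∈ t}) : Fin N) := by
  subst hst; rfl

lemma iotaS_congr {f g : LinExt (LexAt P i Q)} (hS : Sset f = Sset g)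
    (j : Fin (Fintype.card Q)) :
    ((iotaS f j : {x // x ∈ Sset f}) : Fin (Fintype.card (LexAt P i Q)))
      = ((iotaS g j : {x // x ∈ Sset g}) : Fin (Fintype.card (LexAt P i Q))) :=
  orderIso_coe_congr hS _ _ j

lemma replaceQ_replaceQ (f : LinExt (LexAt P i Q)) (h h' : LinExt Q) :
    replaceQ (replaceQ f h) h' = replaceQ f h' := by
  apply Subtype.ext; apply Equiv.ext
  rintro (p | q)
  · rfl
  · rw [replaceQ_apply_inr, replaceQ_apply_inr]
    exact iotaS_congr (Sset_replaceQ f h) _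

/-- The block decomposition: linear extensions of `P ∘ᵢ Q` are in bijection with
pairs of a "block" (a linear extension restricting to a fixed `h₀`) and a linear
extension of `Q`. -/
noncomputable def blockEquiv (h₀ : LinExt Q) :
    LinExt (LexAt P i Q) ≃ {f : LinExt (LexAt P i Q) // restrQ f = h₀} × LinExt Q where
  toFun f := (⟨replaceQ f h₀, restrQ_replaceQ f h₀⟩, restrQ f)
  invFun c := replaceQ c.1.1 c.2
  left_inv f := by
    simp only
    rw [replaceQ_replaceQ, replaceQ_restrQ]
  right_inv c := by
    obtain ⟨⟨f, hf⟩, h⟩ := c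
    simp only [Prod.mk.injEq, Subtype.mk.injEq]
    constructor
    · rw [replaceQ_replaceQ, ← hf, replaceQ_restrQ]
    · rw [restrQ_replaceQ]

end BlockDecomposition

/-- applying the GPC witnessing comparisons of `Q` inside `P ∘_i Q`,
with `k = e(P∘ᵢQ)/e(Q)`, we get `t₀′ = k·t₀`, `t₁′ = k·t₁` and `t₂′ = k·t₂`. -/
theorem gpc_counts_scale (P Q : Type) [PartialOrder P] [Fintype P] [DecidableEq P]
    [PartialOrder Q] [Fintype Q] (i : P) (a b c d : Q)
    (hab : ¬ a ≤ b ∧ ¬ b ≤ a)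
    (hgold : numBelow Q a b + numBelow2 Q a b c d < numExt Q) :
    numExt (LexAt P i Q) = (numExt (LexAt P i Q) / numExt Q) * numExt Q ∧
    numBelow (LexAt P i Q) (Sum.inr a) (Sum.inr b) =
      (numExt (LexAt P i Q) / numExt Q) * numBelow Q a b ∧
    numBelow2 (LexAt P i Q) (Sum.inr a) (Sum.inr b) (Sum.inr c) (Sum.inr d) =
      (numExt (LexAt P i Q) / numExt Q) * numBelow2 Q a b c d := by
  have hQpos : 0 < numExt Q := lt_of_le_of_lt (Nat.zero_le _) hgold
  have hne : Nonempty (LinExt Q) := by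
    unfold numExt at hQpos
    exact (Nat.card_pos_iff.mp hQpos).1
  obtain ⟨h₀⟩ := hne
  have key : ∀ pq : LinExt Q → Prop,
      Nat.card {f : LinExt (LexAt P i Q) // pq (restrQ f)} =
        Nat.card {f : LinExt (LexAt P i Q) // restrQ f = h₀} * Nat.card {h : LinExt Q // pq h} := by
    intro pq
    have e1 : {f : LinExt (LexAt P i Q) // pq (restrQ f)} ≃
        {c : {f : LinExt (LexAt P i Q) // restrQ f = h₀} × LinExt Q // pq c.2} :=
      (blockEquiv h₀).subtypeEquiv (fun f => Iff.rfl)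
    have e2 : {c : {f : LinExt (LexAt P i Q) // restrQ f = h₀} × LinExt Q // pq c.2} ≃
        {f : LinExt (LexAt P i Q) // restrQ f = h₀} × {h : LinExt Q // pq h} :=
      ⟨fun x => (x.1.1, ⟨x.1.2, x.2⟩), fun y => ⟨(y.1, y.2.1), y.2.2⟩,
        fun _ => rfl, fun _ => rfl⟩
    rw [Nat.card_congr (e1.trans e2), Nat.card_prod]
  have hTot : numExt (LexAt P i Q) =
      Nat.card {f : LinExt (LexAt P i Q) // restrQ f = h₀} * numExt Q := by
    unfold numExt
    rw [Nat.card_congr (blockEquiv h₀), Nat.card_prod]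
  have hk : numExt (LexAt P i Q) / numExt Q =
      Nat.card {f : LinExt (LexAt P i Q) // restrQ f = h₀} := by
    rw [hTot, Nat.mul_div_cancel _ hQpos]
  refine ⟨by rw [hk, hTot], ?_, ?_⟩
  · rw [hk]
    unfold numBelow
    have e3 : {f : LinExt (LexAt P i Q) // f.1 (Sum.inr a) < f.1 (Sum.inr b)} ≃
        {f : LinExt (LexAt P i Q) // (restrQ f).1 a < (restrQ f).1 b} :=
      Equiv.subtypeEquivRight (fun f => (restrQ_lt_iff f a b).symm)
    rw [Nat.card_congr e3]
    exact key (fun h => h.1 a < h.1 b)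
  · rw [hk]
    unfold numBelow2
    have e3 : {f : LinExt (LexAt P i Q) //
        f.1 (Sum.inr a) < f.1 (Sum.inr b) ∧ f.1 (Sum.inr c) < f.1 (Sum.inr d)} ≃
        {f : LinExt (LexAt P i Q) //
          (restrQ f).1 a < (restrQ f).1 b ∧ (restrQ f).1 c < (restrQ f).1 d} :=
      Equiv.subtypeEquivRight (fun f =>
        by rw [restrQ_lt_iff f a b, restrQ_lt_iff f c d])
    rw [Nat.card_congr e3]
    exact key (fun h => h.1 a < h.1 b ∧ h.1 c < h.1 d)
end

section
/- Let P be a finite poset, x_i ∈ P, and Q = ⟨n⟩ an n-element chain. For a linear extension f of P, let k_f + 1 be the number of positions at which f(x_i) can be placed between max{f(s) : s ≤_P x_i, s ≠ x_i} and min{f(r) : r ≥_P x_i, r ≠ x_i} (i.e., |T_f| = k_f + 1 for the block of linear extensions agreeing with f off x_i). Then the fiber over T_f in L(P ∘_{x_i} ⟨n⟩) under the projection sending a linear extension to its induced extension of P (placing x_i at the minimum of the image of Q) has exactly multichoose(k_f + 1, n) = C(k_f + n, n) elements. -/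
open scoped Lex

open Finset

section Helpers

/-- Equiv between monotone tuples and `Sym`. -/
def monoSymEquiv (α : Type*) [LinearOrder α] (n : ℕ) :
    {c : Fin n → α // Monotone c} ≃ Sym α n where
  toFun c := ⟨Multiset.map c.1 Finset.univ.val, by simp⟩
  invFun s := ⟨fun q => (Multiset.sort s.1 (fun x y : α => x ≤ y)).get
      (Fin.cast (show n = (Multiset.sort s.1 (fun x y : α => x ≤ y)).length from by simp [s.2]) q), by
    intro a b hab
    rcases eq_or_lt_of_le hab with rfl | h
    · exact le_rfl
    · exact (Multiset.pairwise_sort _ _).rel_get_of_lt (by exact h)⟩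
  left_inv c := by
    obtain ⟨c, hc⟩ := c
    apply Subtype.ext
    funext q
    have h1 : Multiset.map c Finset.univ.val = ↑(List.ofFn c) := by simp
    have h3 : Multiset.sort (Multiset.map c Finset.univ.val) (fun x y : α => x ≤ y) = List.ofFn c := by
      rw [h1]
      apply fun hp h1 h2 => List.Perm.eq_of_pairwise' (r := fun x y : α => x ≤ y) h1 h2 hp
      · exact Multiset.coe_eq_coe.mp (Multiset.sort_eq _ (fun x y : α => x ≤ y))
      · exact Multiset.pairwise_sort _ _
      · exact hc.sortedLE_ofFn.pairwise
    simp only [List.get_eq_getElem, h3, List.getElem_ofFn]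
    congr 1
  right_inv s := by
    obtain ⟨s, hs⟩ := s
    apply Subtype.ext
    simp only
    rw [show (Multiset.map _ Finset.univ.val : Multiset _) = _ from Fin.univ_val_map _]
    conv_rhs => rw [← Multiset.sort_eq s (fun x y : α => x ≤ y)]
    congr 1
    apply List.ext_getElem (by simp [hs])
    intro i h1 h2
    simp

end Helpers
theorem card_monoTuples (α : Type*) [LinearOrder α] [Fintype α] (n : ℕ) :
    Fintype.card {c : Fin n → α // Monotone c} = (Fintype.card α + n - 1).choose n := by
  rw [Fintype.card_congr (monoSymEquiv α n), Sym.card_sym_eq_choose]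

/-- rank identity: the value of a bijection to `Fin N` equals the number of elements below. -/
theorem rank_eq {β : Type*} [Fintype β] [DecidableEq β] {N : ℕ} (G : β ≃ Fin N) (x : β) :
    (G x : ℕ) = #(Finset.univ.filter fun y => G y < G x) := by
  have himg : (Finset.univ.filter fun y => G y < G x).image G
      = Finset.univ.filter (fun k => k < G x) := by
    ext k
    simp only [Finset.mem_image, Finset.mem_filter, Finset.mem_univ, true_and]
    constructor
    · rintro ⟨y, hy, rfl⟩; exact hy
    · intro hk; exact ⟨G.symm k, by simpa using hk, by simp⟩
  have h2 : Finset.univ.filter (fun k : Fin N => k < G x) = Finset.Iio (G x) := by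
    ext k; simp
  rw [← Finset.card_image_of_injective _ G.injective, himg, h2, Fin.card_Iio]

theorem filter_sum_card {A B : Type*} [Fintype A] [Fintype B]
    (p : A ⊕ B → Prop) [DecidablePred p] :
    #(Finset.univ.filter p) = #(Finset.univ.filter fun a => p (.inl a))
      + #(Finset.univ.filter fun b => p (.inr b)) := by
  rw [← Fintype.card_subtype, ← Fintype.card_subtype, ← Fintype.card_subtype, ← Fintype.card_sum]
  apply Fintype.card_congr
  exact {
    toFun := fun x => match x with
      | ⟨.inl a, h⟩ => .inl ⟨a, h⟩
      | ⟨.inr b, h⟩ => .inr ⟨b, h⟩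
    invFun := fun x => match x with
      | .inl ⟨a, h⟩ => ⟨.inl a, h⟩
      | .inr ⟨b, h⟩ => ⟨.inr b, h⟩
    left_inv := fun x => by rcases x with ⟨a | b, h⟩ <;> rfl
    right_inv := fun x => by rcases x with ⟨a, h⟩ | ⟨b, h⟩ <;> rfl }

theorem fin_filter_le_card {n : ℕ} (q : Fin n) :
    #(Finset.univ.filter fun q' : Fin n => q' ≤ q) = q + 1 := by
  have h : (Finset.univ.filter fun q' : Fin n => q' ≤ q) = Finset.Iic q := by ext; simp
  rw [h, Fin.card_Iic]

theorem fin_filter_lt_card {n : ℕ} (q : Fin n) :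
    #(Finset.univ.filter fun q' : Fin n => q' < q) = q := by
  have h : (Finset.univ.filter fun q' : Fin n => q' < q) = Finset.Iio q := by ext; simp
  rw [h, Fin.card_Iio]
namespace Stmt17

open Finset

variable {P : Type} [PartialOrder P] [Fintype P] [DecidableEq P] (xi : P) (f : LinExt P)

/-- rank of `p` among the non-`xi` elements, according to `f`. -/
def rk (p : {p : P // p ≠ xi}) : ℕ :=
  #(univ.filter fun p' : {p : P // p ≠ xi} => f.1 p'.1 < f.1 p.1)

local notation "m'" => Fintype.card {p : P // p ≠ xi}

theorem rk_lt_card (p : {p : P // p ≠ xi}) : rk xi f p < m' := by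
  have h : (univ.filter fun p' : {p : P // p ≠ xi} => f.1 p'.1 < f.1 p.1) ⊆ univ.erase p := by
    intro p' hp'
    simp only [mem_filter, mem_univ, true_and] at hp'
    exact Finset.mem_erase.mpr ⟨fun h => by subst h; exact lt_irrefl _ hp', mem_univ _⟩
  calc rk xi f p ≤ #(univ.erase p) := Finset.card_le_card h
    _ < #(univ : Finset {p : P // p ≠ xi}) := Finset.card_erase_lt_of_mem (mem_univ _)
    _ = m' := Finset.card_univ

theorem rk_strictMono {a b : {p : P // p ≠ xi}} (hab : f.1 a.1 < f.1 b.1) :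
    rk xi f a < rk xi f b := by
  apply Finset.card_lt_card
  constructor
  · intro p' hp'
    simp only [mem_filter, mem_univ, true_and] at hp' ⊢
    exact hp'.trans hab
  · intro hsub
    have := hsub (Finset.mem_filter.mpr ⟨mem_univ _, hab⟩)
    simp only [mem_filter, mem_univ, true_and] at this
    exact lt_irrefl _ this

theorem rk_lt_rk_iff {a b : {p : P // p ≠ xi}} :
    rk xi f a < rk xi f b ↔ f.1 a.1 < f.1 b.1 := by
  constructor
  · intro h
    rcases lt_trichotomy (f.1 a.1) (f.1 b.1) with h' | h' | h'
    · exact h'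
    · exact absurd h (by rw [show a = b from Subtype.ext (f.1.injective h')]; exact lt_irrefl _)
    · exact absurd (rk_strictMono xi f h') (by omega)
  · exact rk_strictMono xi f

theorem rk_inj {a b : {p : P // p ≠ xi}} (h : rk xi f a = rk xi f b) : a = b := by
  by_contra hne
  have hfa : f.1 a.1 ≠ f.1 b.1 := fun h' => hne (Subtype.ext (f.1.injective h'))
  rcases lt_or_gt_of_ne hfa with h' | h'
  · exact absurd (rk_strictMono xi f h') (by omega)
  · exact absurd (rk_strictMono xi f h') (by omega)

/-- The number of `p` with `rk p < t` is `t`, for `t ≤ m'`. -/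
theorem card_rk_lt {t : ℕ} (ht : t ≤ m') :
    #(univ.filter fun p : {p : P // p ≠ xi} => rk xi f p < t) = t := by
  have hinj : Function.Injective (rk xi f) := fun a b h => rk_inj xi f h
  have himg : univ.image (rk xi f) = Finset.range m' := by
    apply Finset.eq_of_subset_of_card_le
    · intro k hk
      simp only [mem_image, mem_univ, true_and] at hk
      obtain ⟨p, rfl⟩ := hk
      exact Finset.mem_range.mpr (rk_lt_card xi f p)
    · rw [Finset.card_range, Finset.card_image_of_injective _ hinj, Finset.card_univ]
  have h1 : (univ.filter fun p : {p : P // p ≠ xi} => rk xi f p < t).image (rk xi f)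
      = (univ.image (rk xi f)).filter (· < t) := by
    rw [Finset.filter_image]
  have h2 : (Finset.range m').filter (· < t) = Finset.range t := by
    ext k
    simp only [Finset.mem_filter, Finset.mem_range]
    omega
  rw [← Finset.card_image_of_injective _ hinj, h1, himg, h2, Finset.card_range]

end Stmt17
namespace Stmt17

open Finset

variable {P : Type} [PartialOrder P] [Fintype P] [DecidableEq P] (xi : P) (f : LinExt P)

noncomputable local instance : DecidableRel ((· < ·) : P → P → Prop) := Classical.decRel _
noncomputable local instance : DecidableRel ((· ≤ ·) : P → P → Prop) := Classical.decRel _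

local notation "m'" => Fintype.card {p : P // p ≠ xi}

/-- The set of valid gaps for inserting (copies of) `xi` relative to `f`. -/
noncomputable def ValidSet : Finset (Fin (m' + 1)) :=
  univ.filter fun j => ∀ p : {p : P // p ≠ xi},
    (p.1 < xi → rk xi f p < (j : ℕ)) ∧ (xi < p.1 → (j : ℕ) ≤ rk xi f p)

/-- Monotone tuples of valid gaps. -/
def MonoTuples (n : ℕ) :=
  {c : Fin n → Fin (m' + 1) // Monotone c ∧ ∀ q, c q ∈ ValidSet xi f}

variable {n : ℕ}

/-- number of gap entries that are `≤ rk p`. -/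
def cnt (c : Fin n → Fin (m' + 1)) (p : {p : P // p ≠ xi}) : ℕ :=
  #(univ.filter fun q => (c q : ℕ) ≤ rk xi f p)

theorem cnt_le (c : Fin n → Fin (m' + 1)) (p : {p : P // p ≠ xi}) : cnt xi f c p ≤ n :=
  le_trans (Finset.card_filter_le _ _) (by simp)

theorem cross1 {c : Fin n → Fin (m' + 1)} (hc : Monotone c) {q : Fin n}
    {p : {p : P // p ≠ xi}} (h : (c q : ℕ) ≤ rk xi f p) :
    (c q : ℕ) + q < rk xi f p + cnt xi f c p := by
  have hsub : (univ.filter fun q' : Fin n => q' ≤ q) ⊆ univ.filter fun q' => (c q' : ℕ) ≤ rk xi f p := by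
    intro q' hq'
    simp only [mem_filter, mem_univ, true_and] at hq' ⊢
    exact le_trans (by exact_mod_cast hc hq') h
  have := Finset.card_le_card hsub
  rw [fin_filter_le_card] at this
  have h2 : (q : ℕ) + 1 ≤ cnt xi f c p := this
  omega

theorem cross2 {c : Fin n → Fin (m' + 1)} (hc : Monotone c) {q : Fin n}
    {p : {p : P // p ≠ xi}} (h : rk xi f p < (c q : ℕ)) :
    rk xi f p + cnt xi f c p < (c q : ℕ) + q := by
  have hsub : (univ.filter fun q' : Fin n => (c q' : ℕ) ≤ rk xi f p) ⊆ univ.filter fun q' => q' < q := by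
    intro q' hq'
    simp only [mem_filter, mem_univ, true_and] at hq' ⊢
    by_contra hle
    push_neg at hle
    exact absurd (le_trans (show (c q : ℕ) ≤ c q' by exact_mod_cast hc hle) hq') (by omega)
  have := Finset.card_le_card hsub
  rw [fin_filter_lt_card] at this
  have h2 : cnt xi f c p ≤ (q : ℕ) := this
  omega

theorem monoL {c : Fin n → Fin (m' + 1)} {a b : {p : P // p ≠ xi}}
    (h : rk xi f a < rk xi f b) : rk xi f a + cnt xi f c a < rk xi f b + cnt xi f c b := by
  have hsub : (univ.filter fun q : Fin n => (c q : ℕ) ≤ rk xi f a)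
      ⊆ univ.filter fun q => (c q : ℕ) ≤ rk xi f b := by
    intro q hq
    simp only [mem_filter, mem_univ, true_and] at hq ⊢
    omega
  have := Finset.card_le_card hsub
  have h2 : cnt xi f c a ≤ cnt xi f c b := this
  omega

omit [PartialOrder P] in
theorem card_lexAt_fin : Fintype.card (LexAt P xi (Fin n)) = m' + n := by
  rw [show Fintype.card (LexAt P xi (Fin n)) = Fintype.card ({p : P // p ≠ xi} ⊕ Fin n) from rfl,
    Fintype.card_sum, Fintype.card_fin]

end Stmt17
namespace Stmt17

open Finset

variable {P : Type} [PartialOrder P] [Fintype P] [DecidableEq P] (xi : P) (f : LinExt P)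

local notation "m'" => Fintype.card {p : P // p ≠ xi}

variable {n : ℕ}

/-- The underlying function of the linear extension associated to a monotone tuple of gaps. -/
noncomputable def toFiberFun (c : MonoTuples xi f n) (x : LexAt P xi (Fin n)) :
    Fin (Fintype.card (LexAt P xi (Fin n))) :=
  match x with
  | .inl p => ⟨rk xi f p + cnt xi f c.1 p, by
      have h1 := rk_lt_card xi f p
      have h2 := cnt_le xi f c.1 p
      rw [card_lexAt_fin]; omega⟩
  | .inr q => ⟨(c.1 q : ℕ) + q, by
      have h1 : (c.1 q : ℕ) < m' + 1 := (c.1 q).isLt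
      have h2 := q.isLt
      rw [card_lexAt_fin]; omega⟩

theorem toFiberFun_inl (c : MonoTuples xi f n) (p : {p : P // p ≠ xi}) :
    (toFiberFun xi f c (.inl p) : ℕ) = rk xi f p + cnt xi f c.1 p := rfl

theorem toFiberFun_inr (c : MonoTuples xi f n) (q : Fin n) :
    (toFiberFun xi f c (.inr q) : ℕ) = (c.1 q : ℕ) + q := rfl

theorem valid_lt (c : MonoTuples xi f n) (q : Fin n) {p : {p : P // p ≠ xi}}
    (h : p.1 < xi) : rk xi f p < (c.1 q : ℕ) := by
  have := c.2.2 q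
  simp only [ValidSet, mem_filter] at this
  exact (this.2 p).1 h

theorem valid_ge (c : MonoTuples xi f n) (q : Fin n) {p : {p : P // p ≠ xi}}
    (h : xi < p.1) : (c.1 q : ℕ) ≤ rk xi f p := by
  have := c.2.2 q
  simp only [ValidSet, mem_filter] at this
  exact (this.2 p).2 h

theorem toFiberFun_inj (c : MonoTuples xi f n) : Function.Injective (toFiberFun xi f c) := by
  intro x y h
  have hval := congrArg Fin.val h
  rcases x with p | q <;> rcases y with p' | q'
  · rw [toFiberFun_inl, toFiberFun_inl] at hval
    rcases lt_trichotomy (rk xi f p) (rk xi f p') with hlt | heq | hlt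
    · exact absurd hval (by have := monoL xi f (c := c.1) hlt; omega)
    · exact congrArg Sum.inl (rk_inj xi f heq)
    · exact absurd hval (by have := monoL xi f (c := c.1) hlt; omega)
  · rw [toFiberFun_inl, toFiberFun_inr] at hval
    rcases le_or_gt (c.1 q' : ℕ) (rk xi f p) with hle | hlt
    · exact absurd hval (by have := cross1 xi f c.2.1 hle; omega)
    · exact absurd hval (by have := cross2 xi f c.2.1 hlt; omega)
  · rw [toFiberFun_inr, toFiberFun_inl] at hval
    rcases le_or_gt (c.1 q : ℕ) (rk xi f p') with hle | hlt
    · exact absurd hval (by have := cross1 xi f c.2.1 hle; omega)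
    · exact absurd hval (by have := cross2 xi f c.2.1 hlt; omega)
  · rw [toFiberFun_inr, toFiberFun_inr] at hval
    rcases lt_trichotomy q q' with hlt | heq | hlt
    · exact absurd hval (by
        have h1 : (c.1 q : ℕ) ≤ c.1 q' := by exact_mod_cast c.2.1 hlt.le
        have h2 : (q : ℕ) < q' := hlt
        omega)
    · exact congrArg Sum.inr heq
    · exact absurd hval (by
        have h1 : (c.1 q' : ℕ) ≤ c.1 q := by exact_mod_cast c.2.1 hlt.le
        have h2 : (q' : ℕ) < q := hlt
        omega)

/-- The linear extension of `LexAt P xi (Fin n)` associated to a monotone tuple of gaps. -/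
noncomputable def toFiberExt (c : MonoTuples xi f n) : LinExt (LexAt P xi (Fin n)) := by
  refine ⟨Equiv.ofBijective (toFiberFun xi f c)
    ((Fintype.bijective_iff_injective_and_card _).mpr ⟨toFiberFun_inj xi f c, by simp⟩), ?_⟩
  intro x y hxy
  have hle := hxy.le
  have hnot := hxy.not_ge
  show toFiberFun xi f c x < toFiberFun xi f c y
  rw [Fin.lt_def]
  rcases x with p | q <;> rcases y with p' | q'
  · have h1 : p.1 ≤ p'.1 := hle
    have h2 : ¬ p'.1 ≤ p.1 := fun hh => hnot hh
    have h3 : f.1 p.1 < f.1 p'.1 := f.2 _ _ (lt_of_le_not_ge h1 h2)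
    rw [toFiberFun_inl, toFiberFun_inl]
    exact monoL xi f (c := c.1) (rk_strictMono xi f h3)
  · have h1 : p.1 < xi := hle
    rw [toFiberFun_inl, toFiberFun_inr]
    exact cross2 xi f c.2.1 (valid_lt xi f c q' h1)
  · have h1 : xi < p'.1 := hle
    rw [toFiberFun_inr, toFiberFun_inl]
    exact cross1 xi f c.2.1 (valid_ge xi f c q h1)
  · have h1 : q ≤ q' := hle
    have h2 : ¬ q' ≤ q := fun hh => hnot hh
    have h3 : (q : ℕ) < q' := lt_of_le_not_ge h1 h2
    rw [toFiberFun_inr, toFiberFun_inr]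
    have h4 : (c.1 q : ℕ) ≤ c.1 q' := by exact_mod_cast c.2.1 h1
    omega

theorem toFiberExt_apply (c : MonoTuples xi f n) (x : LexAt P xi (Fin n)) :
    (toFiberExt xi f c).1 x = toFiberFun xi f c x := rfl

theorem toFiberExt_cond (c : MonoTuples xi f n) (a b : {p : P // p ≠ xi}) :
    (toFiberExt xi f c).1 (Sum.inl a) < (toFiberExt xi f c).1 (Sum.inl b) ↔ f.1 a.1 < f.1 b.1 := by
  erw [toFiberExt_apply, toFiberExt_apply]
  rw [Fin.lt_def, toFiberFun_inl, toFiberFun_inl,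
    ← rk_lt_rk_iff xi f]
  constructor
  · intro h
    rcases lt_trichotomy (rk xi f a) (rk xi f b) with hlt | heq | hlt
    · exact hlt
    · exact absurd h (by rw [rk_inj xi f heq]; exact lt_irrefl _)
    · exact absurd h (by have := monoL xi f (c := c.1) hlt; omega)
  · exact fun h => monoL xi f (c := c.1) h

end Stmt17
namespace Stmt17

open Finset

variable {P : Type} [PartialOrder P] [Fintype P] [DecidableEq P] (xi : P) (f : LinExt P)

local notation "m'" => Fintype.card {p : P // p ≠ xi}

variable {n : ℕ}

local notation "ltL" => @LT.lt (LexAt P xi (Fin n))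
  (@Preorder.toLT _ (@PartialOrder.toPreorder _ (LexAt.instPartialOrder P xi (Fin n))))

/-- The fiber of the projection over the block of `f`. -/
def Fiber (n : ℕ) :=
  {F : LinExt (LexAt P xi (Fin n)) // ∀ a b : {p : P // p ≠ xi},
    (F.1 (Sum.inl a) < F.1 (Sum.inl b) ↔ f.1 a.1 < f.1 b.1)}

theorem lexat_lt_inl_inr {p : {p : P // p ≠ xi}} (h : p.1 < xi) (q : Fin n) :
    ltL (Sum.inl p) (Sum.inr q) :=
  lt_iff_le_not_ge.mpr ⟨h, fun hh => absurd (show xi < p.1 from hh) (lt_asymm h)⟩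

theorem lexat_lt_inr_inl {p : {p : P // p ≠ xi}} (h : xi < p.1) (q : Fin n) :
    ltL (Sum.inr q) (Sum.inl p) :=
  lt_iff_le_not_ge.mpr ⟨h, fun hh => absurd (show p.1 < xi from hh) (lt_asymm h)⟩

theorem lexat_lt_inl_inl {a b : {p : P // p ≠ xi}} (h : a.1 < b.1) :
    ltL (Sum.inl a) (Sum.inl b) :=
  lt_iff_le_not_ge.mpr ⟨h.le, fun hh => absurd (show b.1 ≤ a.1 from hh) (not_le_of_gt h)⟩

theorem lexat_lt_inr_inr {q q' : Fin n} (h : q < q') :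
    ltL (Sum.inr q) (Sum.inr q') :=
  lt_iff_le_not_ge.mpr ⟨h.le, fun hh => absurd (show q' ≤ q from hh) (not_le_of_gt h)⟩

theorem inr_lt_inr_iff (F : LinExt (LexAt P xi (Fin n))) (q q' : Fin n) :
    F.1 (Sum.inr q) < F.1 (Sum.inr q') ↔ q < q' := by
  constructor
  · intro h
    by_contra hle
    push_neg at hle
    rcases eq_or_lt_of_le hle with rfl | hlt
    · exact lt_irrefl _ h
    · exact lt_asymm h (F.2 _ _ (lexat_lt_inr_inr xi hlt))
  · exact fun h => F.2 _ _ (lexat_lt_inr_inr xi h)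

/-- The count of non-`xi` elements below `F (inl ·)` recovers `rk`. -/
theorem rkF_eq (F : Fiber xi f n) (p : {p : P // p ≠ xi}) :
    #(univ.filter fun p' : {p : P // p ≠ xi} => F.1.1 (.inl p') < F.1.1 (.inl p)) = rk xi f p := by
  rw [rk]
  congr 1
  ext p'
  simp only [mem_filter, mem_univ, true_and]
  exact F.2 p' p

/-- The gap tuple extracted from an element of the fiber. -/
noncomputable def gapOf (F : Fiber xi f n) (q : Fin n) : Fin (m' + 1) :=
  ⟨#(univ.filter fun p : {p : P // p ≠ xi} => F.1.1 (.inl p) < F.1.1 (.inr q)), by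
    have h := Finset.card_filter_le (univ : Finset {p : P // p ≠ xi})
      (fun p => F.1.1 (.inl p) < F.1.1 (.inr q))
    rw [Finset.card_univ] at h
    omega⟩

theorem gapOf_mono (F : Fiber xi f n) : Monotone (gapOf xi f F) := by
  intro q q' hqq
  rcases eq_or_lt_of_le hqq with rfl | hlt
  · exact le_rfl
  · show (gapOf xi f F q : ℕ) ≤ (gapOf xi f F q' : ℕ)
    apply Finset.card_le_card
    intro p hp
    simp only [mem_filter, mem_univ, true_and] at hp ⊢
    exact hp.trans (F.1.2 _ _ (lexat_lt_inr_inr xi hlt))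

theorem lt_gapOf (F : Fiber xi f n) {q : Fin n} {p : {p : P // p ≠ xi}}
    (h : F.1.1 (.inl p) < F.1.1 (.inr q)) : rk xi f p < (gapOf xi f F q : ℕ) := by
  rw [← rkF_eq xi f F p]
  apply Finset.card_lt_card
  rw [Finset.ssubset_iff_of_subset]
  · exact ⟨p, by simp only [mem_filter, mem_univ, true_and]; exact h, by
      simp only [mem_filter, mem_univ, true_and, not_lt]; exact le_rfl⟩
  · intro p' hp'
    simp only [mem_filter, mem_univ, true_and] at hp' ⊢
    exact hp'.trans h

theorem gapOf_le (F : Fiber xi f n) {q : Fin n} {p : {p : P // p ≠ xi}}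
    (h : F.1.1 (.inr q) < F.1.1 (.inl p)) : (gapOf xi f F q : ℕ) ≤ rk xi f p := by
  rw [← rkF_eq xi f F p]
  apply Finset.card_le_card
  intro p' hp'
  simp only [mem_filter, mem_univ, true_and] at hp' ⊢
  exact hp'.trans h

theorem inr_lt_inl_iff_gap (F : Fiber xi f n) (q : Fin n) (p : {p : P // p ≠ xi}) :
    F.1.1 (.inr q) < F.1.1 (.inl p) ↔ (gapOf xi f F q : ℕ) ≤ rk xi f p := by
  constructor
  · exact gapOf_le xi f F
  · intro h
    by_contra hnot
    have hne : F.1.1 (.inl p) ≠ F.1.1 (.inr q) := fun hh => by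
      have := F.1.1.injective hh
      simp at this
    rcases lt_or_gt_of_ne hne with hlt | hgt
    · exact absurd h (by have := lt_gapOf xi f F hlt; omega)
    · exact hnot hgt

theorem gapOf_valid (F : Fiber xi f n) (q : Fin n) : gapOf xi f F q ∈ ValidSet xi f := by
  simp only [ValidSet, mem_filter, mem_univ, true_and]
  intro p
  constructor
  · intro hp
    exact lt_gapOf xi f F (F.1.2 _ _ (lexat_lt_inl_inr xi hp q))
  · intro hp
    exact gapOf_le xi f F (F.1.2 _ _ (lexat_lt_inr_inl xi hp q))

end Stmt17
namespace Stmt17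

open Finset

variable {P : Type} [PartialOrder P] [Fintype P] [DecidableEq P] (xi : P) (f : LinExt P)

local notation "m'" => Fintype.card {p : P // p ≠ xi}

variable {n : ℕ}

theorem toTuple_toFiber (c : MonoTuples xi f n) (q : Fin n) :
    #(univ.filter fun p : {p : P // p ≠ xi} =>
      (toFiberExt xi f c).1 (.inl p) < (toFiberExt xi f c).1 (.inr q)) = (c.1 q : ℕ) := by
  have hiff : ∀ p : {p : P // p ≠ xi},
      ((toFiberExt xi f c).1 (.inl p) < (toFiberExt xi f c).1 (.inr q)
        ↔ rk xi f p < (c.1 q : ℕ)) := by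
    intro p
    erw [toFiberExt_apply, toFiberExt_apply]
    rw [Fin.lt_def, toFiberFun_inl, toFiberFun_inr]
    constructor
    · intro h
      by_contra hle
      push_neg at hle
      exact absurd h (by have := cross1 xi f c.2.1 hle; omega)
    · intro h
      exact cross2 xi f c.2.1 h
  have hset : (univ.filter fun p : {p : P // p ≠ xi} =>
      (toFiberExt xi f c).1 (.inl p) < (toFiberExt xi f c).1 (.inr q))
      = univ.filter fun p : {p : P // p ≠ xi} => rk xi f p < (c.1 q : ℕ) := by
    ext p
    simp only [mem_filter, mem_univ, true_and]
    exact hiff p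
  rw [hset]
  exact card_rk_lt xi f (by have := (c.1 q).isLt; omega)

theorem toFiber_toTuple (F : Fiber xi f n) :
    toFiberExt xi f ⟨gapOf xi f F, gapOf_mono xi f F, gapOf_valid xi f F⟩ = F.1 := by
  apply Subtype.ext
  apply Equiv.ext
  intro x
  apply Fin.ext
  rcases x with p | q
  · erw [toFiberExt_apply, toFiberFun_inl]
    erw [rank_eq F.1.1 (Sum.inl p), filter_sum_card]
    congr 1
    · exact (rkF_eq xi f F p).symm
    · show cnt xi f (gapOf xi f F) p = _
      rw [cnt]
      congr 1
      ext q
      simp only [mem_filter, mem_univ, true_and]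
      exact (inr_lt_inl_iff_gap xi f F q p).symm
  · erw [toFiberExt_apply, toFiberFun_inr]
    erw [rank_eq F.1.1 (Sum.inr q), filter_sum_card]
    congr 1
    have hset : (univ.filter fun q' : Fin n => F.1.1 (.inr q') < F.1.1 (.inr q))
        = univ.filter fun q' : Fin n => q' < q := by
      ext q'
      simp only [mem_filter, mem_univ, true_and]
      exact inr_lt_inr_iff xi F.1 q' q
    rw [hset, fin_filter_lt_card]

/-- The fiber is in bijection with monotone tuples of valid gaps. -/
noncomputable def fiberTupleEquiv : Fiber xi f n ≃ MonoTuples xi f n where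
  toFun F := ⟨gapOf xi f F, gapOf_mono xi f F, gapOf_valid xi f F⟩
  invFun c := ⟨toFiberExt xi f c, toFiberExt_cond xi f c⟩
  left_inv F := Subtype.ext (toFiber_toTuple xi f F)
  right_inv c := Subtype.ext (funext fun q => Fin.ext (toTuple_toFiber xi f c q))

/-- Counting monotone tuples of valid gaps. -/
theorem card_monoTuples_valid :
    Nat.card (MonoTuples xi f n) = ((ValidSet xi f).card + n - 1).choose n := by
  have e : MonoTuples xi f n ≃ {c : Fin n → ↥(ValidSet xi f) // Monotone c} := {
    toFun := fun c => ⟨fun q => ⟨c.1 q, c.2.2 q⟩, fun a b h => by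
      simp only [Subtype.mk_le_mk]
      exact c.2.1 h⟩
    invFun := fun d => ⟨fun q => (d.1 q : Fin (m' + 1)), fun a b h => by
      exact_mod_cast d.2 h, fun q => (d.1 q).2⟩
    left_inv := fun c => Subtype.ext rfl
    right_inv := fun d => Subtype.ext (funext fun q => Subtype.ext rfl) }
  rw [Nat.card_congr e, Nat.card_eq_fintype_card, card_monoTuples, Fintype.card_coe]

end Stmt17
namespace Stmt17

open Finset

variable {P : Type} [PartialOrder P] [Fintype P] [DecidableEq P] (xi : P) (f : LinExt P)

local notation "m'" => Fintype.card {p : P // p ≠ xi}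

/-- The canonical bijection `LexAt P xi (Fin 1) ≃ P`. -/
def iota : LexAt P xi (Fin 1) ≃ P where
  toFun x := match x with
    | .inl p => p.1
    | .inr _ => xi
  invFun p := if h : p = xi then Sum.inr 0 else Sum.inl ⟨p, h⟩
  left_inv x := by
    rcases x with p | q
    · show (if h : p.1 = xi then (Sum.inr 0 : LexAt P xi (Fin 1)) else Sum.inl ⟨p.1, h⟩)
        = Sum.inl p
      rw [dif_neg p.2]
    · show (if h : xi = xi then (Sum.inr 0 : LexAt P xi (Fin 1)) else Sum.inl ⟨xi, h⟩)
        = Sum.inr q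
      rw [dif_pos rfl]
      exact congrArg Sum.inr (Subsingleton.elim 0 q)
  right_inv p := by
    dsimp only
    by_cases h : p = xi
    · erw [dif_pos h]; exact h.symm
    · erw [dif_neg h]

theorem card_lexAt_one : Fintype.card (LexAt P xi (Fin 1)) = Fintype.card P :=
  Fintype.card_congr (iota xi)

theorem iota_strictMono (x y : LexAt P xi (Fin 1)) (hxy : x < y) :
    iota xi x < iota xi y := by
  have hle := hxy.le
  have hnot := hxy.not_ge
  rcases x with p | q <;> rcases y with p' | q'
  · exact lt_of_le_not_ge (show p.1 ≤ p'.1 from hle) (fun hh => hnot hh)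
  · exact hle
  · exact hle
  · exact absurd hxy (by rw [Subsingleton.elim q q']; exact lt_irrefl _)

theorem iotaSymm_strictMono (p p' : P) (hpp : p < p') :
    (iota xi).symm p < (iota xi).symm p' := by
  have e1 : ∀ (r : P) (h : r ≠ xi), (iota xi).symm r = Sum.inl ⟨r, h⟩ := by
    intro r h
    show (if hh : r = xi then (Sum.inr 0 : LexAt P xi (Fin 1)) else Sum.inl ⟨r, hh⟩) = _
    rw [dif_neg h]
  have e2 : ∀ (r : P) (h : r = xi), (iota xi).symm r = Sum.inr 0 := by
    intro r h
    show (if hh : r = xi then (Sum.inr 0 : LexAt P xi (Fin 1)) else Sum.inl ⟨r, hh⟩) = _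
    rw [dif_pos h]
  by_cases h : p = xi <;> by_cases h' : p' = xi
  · exact absurd hpp (by rw [h, h']; exact lt_irrefl _)
  · rw [e2 p h, e1 p' h']
    exact lexat_lt_inr_inl xi (p := ⟨p', h'⟩) (h ▸ hpp) 0
  · rw [e1 p h, e2 p' h']
    exact lexat_lt_inl_inr xi (p := ⟨p, h⟩) (h' ▸ hpp) 0
  · rw [e1 p h, e1 p' h']
    exact lexat_lt_inl_inl xi (a := ⟨p, h⟩) (b := ⟨p', h'⟩) hpp

/-- Transfer of linear extensions along `iota`. -/
def linExtEquivOne : LinExt P ≃ LinExt (LexAt P xi (Fin 1)) where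
  toFun g := ⟨((iota xi).trans g.1).trans (finCongr (card_lexAt_one xi).symm), by
    intro x y hxy
    have h1 := g.2 _ _ (iota_strictMono xi x y hxy)
    show ((g.1 ((iota xi) x)) : ℕ) < ((g.1 ((iota xi) y)) : ℕ)
    exact h1⟩
  invFun G := ⟨((iota xi).symm.trans G.1).trans (finCongr (card_lexAt_one xi)), by
    intro p p' hpp
    have h1 := G.2 _ _ (iotaSymm_strictMono xi p p' hpp)
    show ((G.1 ((iota xi).symm p)) : ℕ) < ((G.1 ((iota xi).symm p')) : ℕ)
    exact h1⟩
  left_inv g := by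
    apply Subtype.ext
    apply Equiv.ext
    intro p
    apply Fin.ext
    show ((g.1 ((iota xi) ((iota xi).symm p))) : ℕ) = (g.1 p : ℕ)
    rw [Equiv.apply_symm_apply]
  right_inv G := by
    apply Subtype.ext
    apply Equiv.ext
    intro x
    apply Fin.ext
    show ((G.1 ((iota xi).symm ((iota xi) x))) : ℕ) = (G.1 x : ℕ)
    rw [Equiv.symm_apply_apply]

theorem linExtEquivOne_inl (g : LinExt P) (p : {p : P // p ≠ xi}) :
    (((linExtEquivOne xi) g).1 (Sum.inl p) : ℕ) = (g.1 p.1 : ℕ) := rfl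

/-- The block `T_f` is in bijection with the fiber for `n = 1`. -/
def blockFiberEquiv :
    {g : LinExt P // ∀ a b : P, a ≠ xi → b ≠ xi → (g.1 a < g.1 b ↔ f.1 a < f.1 b)}
      ≃ Fiber xi f 1 :=
  Equiv.subtypeEquiv (linExtEquivOne xi) (fun g => by
    constructor
    · intro h a b
      rw [Fin.lt_def, linExtEquivOne_inl, linExtEquivOne_inl, ← Fin.lt_def]
      exact h a.1 b.1 a.2 b.2
    · intro h a b ha hb
      have := h ⟨a, ha⟩ ⟨b, hb⟩
      rw [Fin.lt_def, linExtEquivOne_inl, linExtEquivOne_inl, ← Fin.lt_def] at this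
      exact this)

theorem card_block :
    Nat.card {g : LinExt P // ∀ a b : P, a ≠ xi → b ≠ xi → (g.1 a < g.1 b ↔ f.1 a < f.1 b)}
      = (ValidSet xi f).card := by
  have e1 : MonoTuples xi f 1 ≃ ↥(ValidSet xi f) := {
    toFun := fun c => ⟨c.1 0, c.2.2 0⟩
    invFun := fun j => ⟨fun _ => j.1, monotone_const, fun _ => j.2⟩
    left_inv := fun c => Subtype.ext (funext fun q => by rw [Subsingleton.elim q 0])
    right_inv := fun j => rfl }
  rw [Nat.card_congr ((blockFiberEquiv xi f).trans ((fiberTupleEquiv xi f).trans e1)),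
    Nat.card_eq_fintype_card, Fintype.card_coe]

end Stmt17


/-- the fiber over the block `T_f` (linear extensions of `P` with the same
relative order as `f` on `P \\ {x_i}`) of the projection `L(P ∘_{x_i} ⟨n⟩) → L(P)` has
exactly `multichoose (|T_f|, n) = C(|T_f| + n - 1, n)` elements. -/
theorem fiber_card_lexAt_chain (P : Type) [PartialOrder P] [Fintype P] [DecidableEq P]
    (xi : P) (n : ℕ) (f : LinExt P) :
    Nat.card {F : LinExt (LexAt P xi (Fin n)) //
        ∀ a b : {p : P // p ≠ xi},
          (F.1 (Sum.inl a) < F.1 (Sum.inl b) ↔ f.1 a.1 < f.1 b.1)} =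
      Nat.choose
        (Nat.card {g : LinExt P //
            ∀ a b : P, a ≠ xi → b ≠ xi → (g.1 a < g.1 b ↔ f.1 a < f.1 b)} + n - 1) n := by
  have h1 : Nat.card {F : LinExt (LexAt P xi (Fin n)) //
      ∀ a b : {p : P // p ≠ xi},
        (F.1 (Sum.inl a) < F.1 (Sum.inl b) ↔ f.1 a.1 < f.1 b.1)}
      = Nat.card (Stmt17.MonoTuples xi f n) :=
    Nat.card_congr (Stmt17.fiberTupleEquiv xi f)
  rw [h1, Stmt17.card_monoTuples_valid, Stmt17.card_block]
end

section
/- Let P be the 6-element poset whose Hasse diagram corresponds to the permutation-encoded poset with relations making δ(P) = 7/15, and let P′ be the 5-element subposet obtained by removing an appropriate point, with δ(P′) = 1/2. Then δ(P) < δ(P′); in particular, δ of a lexicographic sum can be strictly smaller than δ of the outer poset P, i.e., the inequality δ(P(Q₁,…,Qₙ)) ≥ δ(P) fails in general. -/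
open scoped Lex

/-- The 5-element poset `P′` (pcauset {1,5,3,2,4}): `0` below everything, `1` above only
`0`, `2 < 4`, `3 < 4`. It satisfies `δ(P′) = 1/2`. -/
def P5 := Fin 5

instance : DecidableEq P5 := inferInstanceAs (DecidableEq (Fin 5))
instance : Fintype P5 := inferInstanceAs (Fintype (Fin 5))

def p5LE (a b : P5) : Prop := a = b ∨ (a = (0 : Fin 5) ∧ b ≠ (0 : Fin 5)) ∨
    (a = (2 : Fin 5) ∧ b = (4 : Fin 5)) ∨ (a = (3 : Fin 5) ∧ b = (4 : Fin 5))

instance : DecidableRel p5LE := fun a b => by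
  haveI : ∀ (x : P5) (y : Fin 5), Decidable (x = y) := fun x y => decEq x y
  unfold p5LE; infer_instance

theorem p5LE_refl : ∀ a : P5, p5LE a a := by decide
theorem p5LE_trans : ∀ a b c : P5, p5LE a b → p5LE b c → p5LE a c := by decide
theorem p5LE_antisymm : ∀ a b : P5, p5LE a b → p5LE b a → a = b := by decide

instance : PartialOrder P5 where
  le := p5LE
  le_refl := p5LE_refl
  le_trans := p5LE_trans
  le_antisymm := p5LE_antisymm

/-- The 6-element poset `P` (pcauset {1,6,3,4,2,5}), obtained from `P5` by replacing the
point `2` by the 2-chain: `0` below everything, `1` above only `0`, `2 < 3 < 5`,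
`2 < 5`, `4 < 5`. It satisfies `δ(P) = 7/15`. -/
def P6 := Fin 6

instance : DecidableEq P6 := inferInstanceAs (DecidableEq (Fin 6))
instance : Fintype P6 := inferInstanceAs (Fintype (Fin 6))

def p6LE (a b : P6) : Prop := a = b ∨ (a = (0 : Fin 6) ∧ b ≠ (0 : Fin 6)) ∨
    (a = (2 : Fin 6) ∧ b = (3 : Fin 6)) ∨ (a = (2 : Fin 6) ∧ b = (5 : Fin 6)) ∨
    (a = (3 : Fin 6) ∧ b = (5 : Fin 6)) ∨ (a = (4 : Fin 6) ∧ b = (5 : Fin 6))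

instance : DecidableRel p6LE := fun a b => by
  haveI : ∀ (x : P6) (y : Fin 6), Decidable (x = y) := fun x y => decEq x y
  unfold p6LE; infer_instance

theorem p6LE_refl : ∀ a : P6, p6LE a a := by decide
theorem p6LE_trans : ∀ a b c : P6, p6LE a b → p6LE b c → p6LE a c := by decide
theorem p6LE_antisymm : ∀ a b : P6, p6LE a b → p6LE b a → a = b := by decide

instance : PartialOrder P6 where
  le := p6LE
  le_refl := p6LE_refl
  le_trans := p6LE_trans
  le_antisymm := p6LE_antisymm

section Framework

variable {R : Type*} [Fintype R] [DecidableEq R] [PartialOrder R]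
  [DecidableRel (α := R) (· < ·)]

/-- The list of all linear extensions encoded as ordered listings of elements. -/
def extL (base : List R) : List (List R) :=
  base.permutations'.filter
    (fun l => decide (∀ x y : R, x < y → l.idxOf x < l.idxOf y))

lemma nodup_extL {base : List R} (hnd : base.Nodup) : (extL base).Nodup :=
  (((base.permutations_perm_permutations').nodup_iff).mp
    (List.nodup_permutations base hnd)).filter _

lemma base_length {base : List R} (hnd : base.Nodup) (hmem : ∀ x : R, x ∈ base) :
    base.length = Fintype.card R := by
  have h1 : base.toFinset = Finset.univ := by
    ext a; simp [hmem]
  rw [← List.toFinset_card_of_nodup hnd, h1, Finset.card_univ]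

/-- The listing associated to a linear extension. -/
def toListExt (f : LinExt R) : List R :=
  (List.finRange (Fintype.card R)).map f.1.symm

lemma toListExt_length (f : LinExt R) : (toListExt f).length = Fintype.card R := by
  simp [toListExt]

lemma toListExt_nodup (f : LinExt R) : (toListExt f).Nodup :=
  (List.nodup_finRange _).map f.1.symm.injective

lemma toListExt_mem (f : LinExt R) (x : R) : x ∈ toListExt f := by
  rw [toListExt, List.mem_map]
  exact ⟨f.1 x, List.mem_finRange _, f.1.symm_apply_apply x⟩

lemma toListExt_getElem (f : LinExt R) (i : ℕ) (h : i < (toListExt f).length) :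
    (toListExt f)[i] = f.1.symm ⟨i, by simpa [toListExt] using h⟩ := by
  simp [toListExt]

lemma toListExt_indexOf (f : LinExt R) (x : R) :
    (toListExt f).idxOf x = f.1 x := by
  have h : ((f.1 x : ℕ)) < (toListExt f).length := by
    simpa [toListExt_length] using (f.1 x).2
  have h2 := List.Nodup.idxOf_getElem (toListExt_nodup f) (f.1 x) h
  rw [toListExt_getElem f _ h] at h2
  simpa using h2

lemma toListExt_mem_extL {base : List R} (hnd : base.Nodup) (hmem : ∀ x : R, x ∈ base)
    (f : LinExt R) : toListExt f ∈ extL base := by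
  rw [extL, List.mem_filter]
  constructor
  · rw [List.mem_permutations']
    refine List.perm_of_nodup_nodup_toFinset_eq (toListExt_nodup f) hnd ?_
    ext a
    simp [toListExt_mem, hmem]
  · rw [decide_eq_true_iff]
    intro x y hxy
    rw [toListExt_indexOf, toListExt_indexOf]
    exact f.2 x y hxy

lemma toL_bijective {base : List R} (hnd : base.Nodup) (hmem : ∀ x : R, x ∈ base) :
    Function.Bijective (fun f : LinExt R =>
      (⟨toListExt f, toListExt_mem_extL hnd hmem f⟩ : {l // l ∈ extL base})) := by
  constructor
  · intro f g h
    have h' : toListExt f = toListExt g := congrArg Subtype.val h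
    apply Subtype.ext
    apply Equiv.coe_fn_injective
    funext x
    apply Fin.ext
    show (f.1 x : ℕ) = g.1 x
    rw [← toListExt_indexOf f x, ← toListExt_indexOf g x, h']
  · rintro ⟨l, hl⟩
    rw [extL, List.mem_filter] at hl
    obtain ⟨hperm, hrel⟩ := hl
    rw [List.mem_permutations'] at hperm
    rw [decide_eq_true_iff] at hrel
    have hnd' : l.Nodup := hperm.nodup_iff.2 hnd
    have hmem' : ∀ x : R, x ∈ l := fun x => hperm.mem_iff.2 (hmem x)
    have hlen : l.length = Fintype.card R := by
      rw [hperm.length_eq, base_length hnd hmem]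
    set g := List.Nodup.getEquivOfForallMemList l hnd' hmem' with hg
    refine ⟨⟨(g.symm.trans (finCongr hlen)), ?_⟩, ?_⟩
    · intro x y hxy
      have := hrel x y hxy
      simpa [g, Fin.lt_def] using this
    · apply Subtype.ext
      show toListExt _ = l
      apply List.ext_getElem
      · exact (toListExt_length _).trans hlen.symm
      · intro i h1 h2
        rw [toListExt_getElem _ i h1]
        show (g.symm.trans (finCongr hlen)).symm _ = _
        simp [g, List.Nodup.getEquivOfForallMemList]

/-- The main equivalence. -/
noncomputable def extEquiv {base : List R} (hnd : base.Nodup) (hmem : ∀ x : R, x ∈ base) :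
    LinExt R ≃ {l // l ∈ extL base} :=
  Equiv.ofBijective _ (toL_bijective hnd hmem)

lemma extEquiv_val {base : List R} (hnd : base.Nodup) (hmem : ∀ x : R, x ∈ base)
    (f : LinExt R) : (extEquiv hnd hmem f).1 = toListExt f := rfl

lemma card_subtype_mem_list {α : Type*} [DecidableEq α] (L : List α) (h : L.Nodup) :
    Nat.card {x // x ∈ L} = L.length := by
  rw [Nat.card_congr (List.Nodup.getEquiv L h).symm, Nat.card_eq_fintype_card,
    Fintype.card_fin]

lemma numExt_eq {base : List R} (hnd : base.Nodup) (hmem : ∀ x : R, x ∈ base) :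
    numExt R = (extL base).length := by
  rw [numExt, Nat.card_congr (extEquiv hnd hmem), card_subtype_mem_list _ (nodup_extL hnd)]

lemma numBelow_eq {base : List R} (hnd : base.Nodup) (hmem : ∀ x : R, x ∈ base) (x y : R) :
    numBelow R x y =
      ((extL base).filter (fun l => decide (l.idxOf x < l.idxOf y))).length := by
  rw [numBelow]
  have e1 : {f : LinExt R // f.1 x < f.1 y} ≃
      {p : {l // l ∈ extL base} // p.1.idxOf x < p.1.idxOf y} := by
    refine (extEquiv hnd hmem).subtypeEquiv fun f => ?_
    rw [extEquiv_val, toListExt_indexOf, toListExt_indexOf, Fin.lt_def]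
  have e2 : {p : {l // l ∈ extL base} // p.1.idxOf x < p.1.idxOf y} ≃
      {l // l ∈ (extL base).filter (fun l => decide (l.idxOf x < l.idxOf y))} :=
    { toFun := fun p => ⟨p.1.1, List.mem_filter.2 ⟨p.1.2, by simpa using p.2⟩⟩
      invFun := fun l => ⟨⟨l.1, (List.mem_filter.1 l.2).1⟩, by
        simpa using (List.mem_filter.1 l.2).2⟩
      left_inv := fun p => rfl
      right_inv := fun l => rfl }
  rw [Nat.card_congr (e1.trans e2),
    card_subtype_mem_list _ ((nodup_extL hnd).filter _)]

end Framework
section Concrete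

instance : DecidableRel (α := P5) (· ≤ ·) := fun a b => (inferInstance : Decidable (p5LE a b))
instance : DecidableRel (α := P6) (· ≤ ·) := fun a b => (inferInstance : Decidable (p6LE a b))
instance : DecidableRel (α := P5) (· < ·) :=
  fun a b => decidable_of_iff _ lt_iff_le_not_ge.symm
instance : DecidableRel (α := P6) (· < ·) :=
  fun a b => decidable_of_iff _ lt_iff_le_not_ge.symm

def base5 : List P5 := List.finRange 5
def base6 : List P6 := List.finRange 6

lemma base5_nodup : base5.Nodup := List.nodup_finRange 5
lemma base6_nodup : base6.Nodup := List.nodup_finRange 6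
lemma base5_mem : ∀ x : P5, x ∈ base5 := fun x => List.mem_finRange x
lemma base6_mem : ∀ x : P6, x ∈ base6 := fun x => List.mem_finRange x

def L5 : List (List P5) :=
  ([[0, 1, 2, 3, 4], [0, 2, 1, 3, 4], [0, 2, 3, 1, 4], [0, 2, 3, 4, 1], [0, 1, 3, 2, 4],
    [0, 3, 1, 2, 4], [0, 3, 2, 1, 4], [0, 3, 2, 4, 1]] : List (List (Fin 5)))

def L6 : List (List P6) :=
  ([[0, 1, 2, 3, 4, 5], [0, 2, 1, 3, 4, 5], [0, 2, 3, 1, 4, 5], [0, 2, 3, 4, 1, 5],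
    [0, 2, 3, 4, 5, 1], [0, 1, 2, 4, 3, 5], [0, 2, 1, 4, 3, 5], [0, 2, 4, 1, 3, 5],
    [0, 2, 4, 3, 1, 5], [0, 2, 4, 3, 5, 1], [0, 1, 4, 2, 3, 5], [0, 4, 1, 2, 3, 5],
    [0, 4, 2, 1, 3, 5], [0, 4, 2, 3, 1, 5], [0, 4, 2, 3, 5, 1]] : List (List (Fin 6)))

set_option maxRecDepth 40000 in
lemma extL_base5 : extL base5 = L5 := by decide
set_option maxRecDepth 40000 in
lemma extL_base6 : extL base6 = L6 := by decide

lemma numExt5 : numExt P5 = 8 := by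
  rw [numExt_eq base5_nodup base5_mem, extL_base5]; rfl

lemma numExt6 : numExt P6 = 15 := by
  rw [numExt_eq base6_nodup base6_mem, extL_base6]; rfl

lemma probBelow5 (x y : P5) : probBelow P5 x y =
    ((L5.filter (fun l => decide (l.idxOf x < l.idxOf y))).length : ℚ) / 8 := by
  rw [probBelow, numBelow_eq base5_nodup base5_mem, extL_base5, numExt5]
  norm_num

lemma probBelow6 (x y : P6) : probBelow P6 x y =
    ((L6.filter (fun l => decide (l.idxOf x < l.idxOf y))).length : ℚ) / 15 := by
  rw [probBelow, numBelow_eq base6_nodup base6_mem, extL_base6, numExt6]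
  norm_num

lemma cast_div_min (a b : ℕ) (e : ℚ) (he : 0 ≤ e) :
    ((min a b : ℕ) : ℚ) / e = min ((a : ℚ)/e) ((b : ℚ)/e) := by
  rw [min_div_div_right he, Nat.cast_min]

lemma cast_div_max (a b : ℕ) (e : ℚ) (he : 0 ≤ e) :
    ((max a b : ℕ) : ℚ) / e = max ((a : ℚ)/e) ((b : ℚ)/e) := by
  rw [max_div_div_right he, Nat.cast_max]

set_option maxRecDepth 40000 in
lemma fold5 : Finset.univ.fold max (0:ℕ) (fun xy : P5 × P5 => if xy.1 = xy.2 then 0 else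
      min ((L5.filter (fun l => decide (l.idxOf xy.1 < l.idxOf xy.2))).length)
          ((L5.filter (fun l => decide (l.idxOf xy.2 < l.idxOf xy.1))).length)) = 4 := by
  decide

set_option maxRecDepth 40000 in
lemma fold6 : Finset.univ.fold max (0:ℕ) (fun xy : P6 × P6 => if xy.1 = xy.2 then 0 else
      min ((L6.filter (fun l => decide (l.idxOf xy.1 < l.idxOf xy.2))).length)
          ((L6.filter (fun l => decide (l.idxOf xy.2 < l.idxOf xy.1))).length)) = 7 := by
  decide

lemma delta5 : delta P5 = 1/2 := by
  rw [delta]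
  rw [Finset.fold_congr (g := fun xy : P5 × P5 => (fun n : ℕ => (n : ℚ)/8)
      ((fun xy : P5 × P5 => if xy.1 = xy.2 then 0 else
      min ((L5.filter (fun l => decide (l.idxOf xy.1 < l.idxOf xy.2))).length)
          ((L5.filter (fun l => decide (l.idxOf xy.2 < l.idxOf xy.1))).length)) xy))]
  · have hh := Finset.fold_hom (s := (Finset.univ : Finset (P5 × P5))) (b := (0:ℕ))
      (op := max) (op' := max) (m := fun n : ℕ => (n : ℚ)/8)
      (f := fun xy : P5 × P5 => if xy.1 = xy.2 then 0 else
        min ((L5.filter (fun l => decide (l.idxOf xy.1 < l.idxOf xy.2))).length)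
            ((L5.filter (fun l => decide (l.idxOf xy.2 < l.idxOf xy.1))).length))
      (fun x y => cast_div_max x y 8 (by norm_num))
    rw [show (0:ℚ) = ((0:ℕ):ℚ)/8 by norm_num, hh, fold5]
    norm_num
  · intro xy _
    by_cases h : xy.1 = xy.2
    · simp [h]
    · simp only [h, if_neg, if_false, probBelow5, cast_div_min _ _ 8 (by norm_num)]

lemma delta6 : delta P6 = 7/15 := by
  rw [delta]
  rw [Finset.fold_congr (g := fun xy : P6 × P6 => (fun n : ℕ => (n : ℚ)/15)
      ((fun xy : P6 × P6 => if xy.1 = xy.2 then 0 else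
      min ((L6.filter (fun l => decide (l.idxOf xy.1 < l.idxOf xy.2))).length)
          ((L6.filter (fun l => decide (l.idxOf xy.2 < l.idxOf xy.1))).length)) xy))]
  · have hh := Finset.fold_hom (s := (Finset.univ : Finset (P6 × P6))) (b := (0:ℕ))
      (op := max) (op' := max) (m := fun n : ℕ => (n : ℚ)/15)
      (f := fun xy : P6 × P6 => if xy.1 = xy.2 then 0 else
        min ((L6.filter (fun l => decide (l.idxOf xy.1 < l.idxOf xy.2))).length)
            ((L6.filter (fun l => decide (l.idxOf xy.2 < l.idxOf xy.1))).length))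
      (fun x y => cast_div_max x y 15 (by norm_num))
    rw [show (0:ℚ) = ((0:ℕ):ℚ)/15 by norm_num, hh, fold6]
    norm_num
  · intro xy _
    by_cases h : xy.1 = xy.2
    · simp [h]
    · simp only [h, if_neg, if_false, probBelow6, cast_div_min _ _ 15 (by norm_num)]

instance : PartialOrder (LexAt P5 ((2 : Fin 5) : P5) (Fin 2)) :=
  LexAt.instPartialOrder P5 ((2 : Fin 5) : P5) (Fin 2)
instance : DecidableEq (LexAt P5 ((2 : Fin 5) : P5) (Fin 2)) :=
  LexAt.instDecidableEq P5 ((2 : Fin 5) : P5) (Fin 2)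
instance : Fintype (LexAt P5 ((2 : Fin 5) : P5) (Fin 2)) :=
  LexAt.instFintype P5 ((2 : Fin 5) : P5) (Fin 2)

/-- The forward map of the order isomorphism. -/
def isoF : P6 → LexAt P5 ((2 : Fin 5) : P5) (Fin 2) :=
  ![Sum.inl ⟨(0 : Fin 5), by exact (by decide : (0 : Fin 5) ≠ 2)⟩, Sum.inl ⟨(1 : Fin 5), by exact (by decide : (1 : Fin 5) ≠ 2)⟩,
    Sum.inr 0, Sum.inr 1,
    Sum.inl ⟨(3 : Fin 5), by exact (by decide : (3 : Fin 5) ≠ 2)⟩, Sum.inl ⟨(4 : Fin 5), by exact (by decide : (4 : Fin 5) ≠ 2)⟩]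

/-- The inverse map of the order isomorphism. -/
def isoG : LexAt P5 ((2 : Fin 5) : P5) (Fin 2) → P6 :=
  fun x => match x with
  | .inl p => (![0, 1, 0, 4, 5] : Fin 5 → Fin 6) p.1
  | .inr q => (![2, 3] : Fin 2 → Fin 6) q

instance : DecidableRel (α := LexAt P5 ((2 : Fin 5) : P5) (Fin 2)) (· ≤ ·) := fun x y =>
  match x, y with
  | .inl a, .inl b => decidable_of_iff (a.1 ≤ b.1) Iff.rfl
  | .inl a, .inr _ => @decidable_of_iff _ _ Iff.rfl ((inferInstance : DecidableRel (α := P5) (· < ·)) a.1 ((2 : Fin 5) : P5))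
  | .inr _, .inl b => @decidable_of_iff _ _ Iff.rfl ((inferInstance : DecidableRel (α := P5) (· < ·)) ((2 : Fin 5) : P5) b.1)
  | .inr q, .inr q' => decidable_of_iff (q ≤ q') Iff.rfl

lemma iso_rel : ∀ a b : P6, isoF a ≤ isoF b ↔ a ≤ b := by decide

def theIso : P6 ≃o LexAt P5 ((2 : Fin 5) : P5) (Fin 2) where
  toFun := isoF
  invFun := isoG
  left_inv := by decide
  right_inv := by decide
  map_rel_iff' := @fun a b => iso_rel a b

end Concrete
/-- `P6` is (isomorphic to) the lexicographic sum `P5 ∘_2 ⟨2⟩`, with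
`δ(P6) = 7/15 < 1/2 = δ(P5)`; so `δ(P(Q₁,…,Qₙ)) ≥ δ(P)` fails in general. -/
theorem delta_counterexample :
    Nonempty (@OrderIso P6 (LexAt P5 ((2 : Fin 5) : P5) (Fin 2)) _
      (LexAt.instPartialOrder P5 ((2 : Fin 5) : P5) (Fin 2)).toLE) ∧
    delta P6 = 7/15 ∧
    delta P5 = 1/2 ∧
    delta P6 < delta P5 := by
  exact ⟨⟨theIso⟩, delta6, delta5, by rw [delta5, delta6]; norm_num⟩
end
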